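/- arXiv:2411.16261 — 3 statements merged into one kernel-verified Lean document; each statement's English description precedes it below -/
import Mathlib

section
/- Let η ∈ (0,1) and let f : ℍ → ℝ be continuous with f ≥ 0. If u, v : ℍ → ℝ are two bounded C² functions each satisfying the Gauss equation Δ_ℍ u = 2e^{2u} − 1 + e^{−4u} f and Δ_ℍ v = 2e^{2v} − 1 + e^{−4v} f on ℍ, and each satisfying e^{−6u(z)} f(z) ≤ η and e^{−6v(z)} f(z) ≤ η for all z ∈ ℍ, then u = v. -/
/-- The upper half-plane, as a subset of `ℂ`. -/
def UpperH : Set ℂ := {z : ℂ | 0 < z.im}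

/-- The hyperbolic Laplacian of `u : ℂ → ℝ` at `z`:
`Δ_ℍ u(z) = (Im z)² (∂²u/∂x² + ∂²u/∂y²)(z)`. -/
noncomputable def hypLaplacian (u : ℂ → ℝ) (z : ℂ) : ℝ :=
  z.im ^ 2 * (iteratedDeriv 2 (fun t : ℝ => u (z + (t : ℂ))) 0 +
              iteratedDeriv 2 (fun t : ℝ => u (z + (t : ℂ) * Complex.I)) 0)

/-- The hyperbolic distance on the upper half-plane. -/
noncomputable def hypDist (z w : ℂ) : ℝ :=
  2 * Real.arsinh (‖z - w‖ / (2 * Real.sqrt (z.im * w.im)))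

open Topology Filter

/-- Second derivative test: at an interior local max, the second derivative is ≤ 0. -/
lemma second_deriv_nonpos {f : ℝ → ℝ} (hf : ContDiffAt ℝ 2 f 0) (hmax : IsLocalMax f 0) :
    iteratedDeriv 2 f 0 ≤ 0 := by
  rw [show (2:ℕ) = 1+1 from rfl, iteratedDeriv_succ, iteratedDeriv_one]
  by_contra hpos
  push_neg at hpos
  -- obtain open set where f is C²
  obtain ⟨t, ht, hft⟩ := hf.contDiffOn le_rfl (by simp)
  obtain ⟨s, hst, hso, hs0⟩ := mem_nhds_iff.mp ht
  have hfs : ContDiffOn ℝ 2 f s := hft.mono hst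
  have hds : ContDiffOn ℝ 1 (deriv f) s := by
    have := (contDiffOn_succ_iff_deriv_of_isOpen (n := 1) hso).mp (by
      exact_mod_cast hfs)
    exact this.2.2
  have hdd : DifferentiableAt ℝ (deriv f) 0 :=
    ((hds.contDiffAt (hso.mem_nhds hs0)).differentiableAt (by norm_num))
  have hD : HasDerivAt (deriv f) (deriv (deriv f) 0) 0 := hdd.hasDerivAt
  have h0 : deriv f 0 = 0 := hmax.deriv_eq_zero
  -- eventually (deriv f x)/x close to deriv (deriv f) 0 > 0
  have hslope := hasDerivAt_iff_tendsto_slope.mp hD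
  have hev : ∀ᶠ x in 𝓝[≠] (0:ℝ), 0 < slope (deriv f) 0 x :=
    hslope.eventually (eventually_gt_nhds hpos)
  rw [eventually_nhdsWithin_iff] at hev
  obtain ⟨δ, hδpos, hδ⟩ := Metric.eventually_nhds_iff.mp hev
  -- shrink δ so ball ⊆ s
  obtain ⟨δ', hδ'pos, hδ's⟩ := Metric.mem_nhds_iff.mp (hso.mem_nhds hs0)
  set ε := min δ δ' with hε
  have hεpos : 0 < ε := lt_min hδpos hδ'pos
  -- deriv f positive on (0, ε)
  have hpos' : ∀ x ∈ Set.Ioo (0:ℝ) ε, 0 < deriv f x := by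
    intro x hx
    have hxδ : dist x 0 < δ := by
      rw [Real.dist_eq, sub_zero, abs_of_pos hx.1]
      exact lt_of_lt_of_le hx.2 (min_le_left _ _)
    have := hδ hxδ (Set.mem_compl_singleton_iff.mpr (ne_of_gt hx.1))
    rw [slope_def_field, h0, sub_zero, sub_zero] at this
    exact (div_pos_iff.mp this).resolve_right (fun h => absurd hx.1 (not_lt.mpr h.2.le)) |>.1
  -- f strict mono on [0, ε/2]
  have hsub : Set.Icc (0:ℝ) (ε/2) ⊆ s := by
    intro x hx
    apply hδ's
    rw [Metric.mem_ball, Real.dist_eq, sub_zero, abs_of_nonneg hx.1]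
    calc x ≤ ε/2 := hx.2
    _ < ε := by linarith
    _ ≤ δ' := min_le_right _ _
  have hmono : StrictMonoOn f (Set.Icc (0:ℝ) (ε/2)) := by
    apply strictMonoOn_of_deriv_pos (convex_Icc _ _)
    · exact (hfs.continuousOn).mono hsub
    · intro x hx
      rw [interior_Icc] at hx
      exact hpos' x ⟨hx.1, lt_of_lt_of_le hx.2 (by linarith)⟩
  -- contradiction with local max
  obtain ⟨ρ, hρpos, hρ⟩ := Metric.eventually_nhds_iff.mp hmax
  set ξ := min (ε/2) (ρ/2)
  have hξpos : 0 < ξ := lt_min (by linarith) (by linarith)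
  have h1 : f 0 < f ξ := hmono ⟨le_rfl, by positivity⟩ ⟨hξpos.le, min_le_left _ _⟩ hξpos
  have h2 : f ξ ≤ f 0 := hρ (by
    rw [Real.dist_eq, sub_zero, abs_of_pos hξpos]
    exact lt_of_le_of_lt (min_le_right _ _) (by linarith))
  linarith

/-- From `C²` at a point: an open neighborhood with differentiability data. -/
lemma contDiffAt_two_data {f : ℝ → ℝ} (hf : ContDiffAt ℝ 2 f 0) :
    ∃ s : Set ℝ, IsOpen s ∧ (0:ℝ) ∈ s ∧ (∀ x ∈ s, DifferentiableAt ℝ f x) ∧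
      DifferentiableAt ℝ (deriv f) 0 := by
  obtain ⟨t, ht, hft⟩ := hf.contDiffOn le_rfl (by simp)
  obtain ⟨s, hst, hso, hs0⟩ := mem_nhds_iff.mp ht
  have hfs : ContDiffOn ℝ 2 f s := hft.mono hst
  have hds : ContDiffOn ℝ 1 (deriv f) s :=
    ((contDiffOn_succ_iff_deriv_of_isOpen (n := 1) hso).mp (by exact_mod_cast hfs)).2.2
  refine ⟨s, hso, hs0, fun x hx => ?_, ?_⟩
  · exact (hfs.contDiffAt (hso.mem_nhds hx)).differentiableAt (by norm_num)
  · exact (hds.contDiffAt (hso.mem_nhds hs0)).differentiableAt (by norm_num)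

/-- Linearity of the second derivative at a point. -/
lemma iteratedDeriv_two_sub_const_mul {f g : ℝ → ℝ} (c : ℝ)
    (hf : ContDiffAt ℝ 2 f 0) (hg : ContDiffAt ℝ 2 g 0) :
    iteratedDeriv 2 (fun t => f t - c * g t) 0 =
      iteratedDeriv 2 f 0 - c * iteratedDeriv 2 g 0 := by
  obtain ⟨s, hso, hs0, hfd, hfd'⟩ := contDiffAt_two_data hf
  obtain ⟨s', hso', hs0', hgd, hgd'⟩ := contDiffAt_two_data hg
  have hev : deriv (fun t => f t - c * g t) =ᶠ[𝓝 (0:ℝ)]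
      fun t => deriv f t - c * deriv g t := by
    filter_upwards [hso.mem_nhds hs0, hso'.mem_nhds hs0'] with x hx hx'
    rw [deriv_fun_sub (hfd x hx) ((hgd x hx').const_mul c), deriv_const_mul c (hgd x hx')]
  rw [show (2:ℕ) = 1+1 from rfl, iteratedDeriv_succ, iteratedDeriv_one,
    iteratedDeriv_succ, iteratedDeriv_one, iteratedDeriv_succ, iteratedDeriv_one,
    hev.deriv_eq, deriv_fun_sub hfd' (hgd'.const_mul c), deriv_const_mul c hgd']


/-- x-direction second derivative of the barrier. -/
lemma barrier_deriv2_x (a x y : ℝ) (hy : 0 < y) :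
    iteratedDeriv 2 (fun t : ℝ => (((x+t)^2 + y^2 + 1)/y) ^ a) 0
      = a*(a-1) * (((x^2+y^2+1)/y) ^ (a-2)) * (2*x/y)^2
        + a * (((x^2+y^2+1)/y) ^ (a-1)) * (2/y) := by
  set p : ℝ → ℝ := fun t => ((x+t)^2 + y^2 + 1)/y with hpdef
  have hppos : ∀ t, 0 < p t := fun t => by
    have : 0 < (x+t)^2 + y^2 + 1 := by positivity
    exact div_pos this hy
  have hp : ∀ t, HasDerivAt p (2*(x+t)/y) t := by
    intro t
    have h0 : HasDerivAt (fun t : ℝ => x + t) 1 t := (hasDerivAt_id t).const_add x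
    have h1 : HasDerivAt (fun t : ℝ => (x+t)^2 + y^2 + 1) (2*(x+t)) t := by
      simpa [add_assoc] using (h0.pow 2).add_const (y^2+1)
    simpa [mul_div_assoc] using h1.div_const y
  have hg : ∀ t, HasDerivAt (fun t => p t ^ a) (2*(x+t)/y * a * p t ^ (a-1)) t :=
    fun t => (hp t).rpow_const (Or.inl (hppos t).ne')
  have hderiv : deriv (fun t => p t ^ a) = fun t => 2*(x+t)/y * a * p t ^ (a-1) :=
    funext fun t => (hg t).deriv
  have h1 : HasDerivAt (fun t => p t ^ (a-1)) (2*(x+0)/y * (a-1) * p 0 ^ (a-1-1)) 0 :=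
    (hp 0).rpow_const (Or.inl (hppos 0).ne')
  have h2 : HasDerivAt (fun t : ℝ => 2*(x+t)/y * a) (2/y*a) 0 := by
    have h0 : HasDerivAt (fun t : ℝ => x + t) 1 0 := (hasDerivAt_id 0).const_add x
    have := ((h0.const_mul 2).div_const y).mul_const a
    simpa using this
  have hG : HasDerivAt (fun t => 2*(x+t)/y * a * p t ^ (a-1))
      ((2/y*a) * p 0 ^ (a-1) + (2*(x+0)/y * a) * (2*(x+0)/y * (a-1) * p 0 ^ (a-1-1))) 0 :=
    h2.mul h1
  rw [show (2:ℕ) = 1+1 from rfl, iteratedDeriv_succ, iteratedDeriv_one, hderiv, hG.deriv]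
  have e1 : p 0 = (x^2+y^2+1)/y := by simp [hpdef]
  have e2 : a - 1 - 1 = a - 2 := by ring
  rw [e1, e2, add_zero]
  ring

/-- y-direction second derivative of the barrier. -/
lemma barrier_deriv2_y (a x y : ℝ) (hy : 0 < y) :
    iteratedDeriv 2 (fun t : ℝ => ((x^2 + (y+t)^2 + 1)/(y+t)) ^ a) 0
      = a*(a-1) * (((x^2+y^2+1)/y) ^ (a-2)) * ((y^2 - x^2 - 1)/y^2)^2
        + a * (((x^2+y^2+1)/y) ^ (a-1)) * (2*(x^2+1)/y^3) := by
  set q : ℝ → ℝ := fun t => (x^2 + (y+t)^2 + 1)/(y+t) with hqdef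
  have hyt : ∀ t ∈ Set.Ioi (-y), 0 < y + t := fun t ht => by
    simp only [Set.mem_Ioi] at ht; linarith
  have hqpos : ∀ t ∈ Set.Ioi (-y), 0 < q t := fun t ht => by
    have h1 : 0 < x^2 + (y+t)^2 + 1 := by positivity
    exact div_pos h1 (hyt t ht)
  have hq : ∀ t ∈ Set.Ioi (-y), HasDerivAt q (((y+t)^2 - x^2 - 1)/(y+t)^2) t := by
    intro t ht
    have hne : y + t ≠ 0 := (hyt t ht).ne'
    have h0 : HasDerivAt (fun t : ℝ => y + t) 1 t := (hasDerivAt_id t).const_add y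
    have hc : HasDerivAt (fun t : ℝ => x^2 + (y+t)^2 + 1) (2*(y+t)) t := by
      have := ((h0.pow 2).const_add (x^2)).add_const 1
      simpa [add_assoc] using this
    have := hc.fun_div h0 hne
    refine this.congr_deriv ?_
    field_simp
    ring
  have hg : ∀ t ∈ Set.Ioi (-y),
      HasDerivAt (fun t => q t ^ a) (((y+t)^2 - x^2 - 1)/(y+t)^2 * a * q t ^ (a-1)) t :=
    fun t ht => (hq t ht).rpow_const (Or.inl (hqpos t ht).ne')
  have hmem : Set.Ioi (-y) ∈ 𝓝 (0:ℝ) := isOpen_Ioi.mem_nhds (by simpa using hy)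
  have hev : deriv (fun t => q t ^ a) =ᶠ[𝓝 (0:ℝ)]
      fun t => ((y+t)^2 - x^2 - 1)/(y+t)^2 * a * q t ^ (a-1) := by
    filter_upwards [hmem] with t ht
    exact (hg t ht).deriv
  -- derivative of the first factor
  have h0' : HasDerivAt (fun t : ℝ => y + t) 1 0 := (hasDerivAt_id 0).const_add y
  have hr : HasDerivAt (fun t : ℝ => ((y+t)^2 - x^2 - 1)/(y+t)^2 * a)
      (2*(x^2+1)/y^3 * a) 0 := by
    have hc : HasDerivAt (fun t : ℝ => (y+t)^2 - x^2 - 1) (2*y) 0 := by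
      simpa [sub_sub] using ((h0'.pow 2).sub_const (x^2+1))
    have hd : HasDerivAt (fun t : ℝ => (y+t)^2) (2*y) 0 := by
      simpa using h0'.fun_pow 2
    have hne : (y+(0:ℝ))^2 ≠ 0 := by positivity
    have := (hc.fun_div hd hne).mul_const a
    refine this.congr_deriv ?_
    rw [add_zero]
    field_simp
    ring
  have h1 : HasDerivAt (fun t => q t ^ (a-1))
      (((y+0)^2 - x^2 - 1)/(y+0)^2 * (a-1) * q 0 ^ (a-1-1)) 0 :=
    (hq 0 (by simpa using hy)).rpow_const (Or.inl (hqpos 0 (by simpa using hy)).ne')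
  have hG : HasDerivAt (fun t => ((y+t)^2 - x^2 - 1)/(y+t)^2 * a * q t ^ (a-1))
      ((2*(x^2+1)/y^3 * a) * q 0 ^ (a-1)
        + (((y+0)^2 - x^2 - 1)/(y+0)^2 * a)
          * (((y+0)^2 - x^2 - 1)/(y+0)^2 * (a-1) * q 0 ^ (a-1-1))) 0 := hr.mul h1
  rw [show (2:ℕ) = 1+1 from rfl, iteratedDeriv_succ, iteratedDeriv_one, hev.deriv_eq, hG.deriv]
  have e1 : q 0 = (x^2+y^2+1)/y := by simp [hqdef]
  have e2 : a - 1 - 1 = a - 2 := by ring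
  rw [e1, e2, add_zero]
  ring

noncomputable def psiH (z : ℂ) : ℝ := (z.re^2 + z.im^2 + 1)/z.im

lemma psiH_pos {z : ℂ} (hz : z ∈ UpperH) : 0 < psiH z := by
  have hy : 0 < z.im := hz
  have : 0 < z.re^2 + z.im^2 + 1 := by positivity
  exact div_pos this hy

lemma psiH_ge_two {z : ℂ} (hz : z ∈ UpperH) : 2 ≤ psiH z := by
  have hy : 0 < z.im := hz
  rw [psiH, le_div_iff₀ hy]
  nlinarith [sq_nonneg z.re, sq_nonneg (z.im - 1)]

lemma psiH_continuousOn : ContinuousOn psiH UpperH := by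
  apply ContinuousOn.div
  · exact (Continuous.continuousOn (by continuity))
  · exact Complex.continuous_im.continuousOn
  · exact fun z hz => ne_of_gt hz

lemma psiH_bounds {z : ℂ} (hz : z ∈ UpperH) {R : ℝ} (hR : psiH z ≤ R) :
    |z.re| ≤ R ∧ 1/R ≤ z.im ∧ z.im ≤ R := by
  have hy : 0 < z.im := hz
  have hψ := psiH_ge_two hz
  have hR2 : 2 ≤ R := le_trans hψ hR
  have hRpos : 0 < R := by linarith
  have hkey : z.re^2 + z.im^2 + 1 ≤ R * z.im := by
    rw [psiH, div_le_iff₀ hy] at hR; linarith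
  have him : z.im ≤ R := by nlinarith [sq_nonneg z.re, sq_nonneg z.im]
  refine ⟨?_, ?_, him⟩
  · rw [abs_le]; constructor <;> nlinarith
  · rw [div_le_iff₀ hRpos]; nlinarith

/-- The Laplacian inequality for the barrier `psiH ^ a`, `0 < a ≤ 1`. -/
lemma barrier_hypLap {a : ℝ} (ha : 0 < a) (ha1 : a ≤ 1) {z : ℂ} (hz : z ∈ UpperH) :
    hypLaplacian (fun w => psiH w ^ a) z ≤ 2 * a * psiH z ^ a := by
  have hy : 0 < z.im := hz
  set x := z.re
  set y := z.im
  have e1 : (fun t : ℝ => psiH (z + (t:ℂ)) ^ a)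
      = fun t : ℝ => (((x + t)^2 + y^2 + 1)/y) ^ a := by
    funext t; simp [psiH, x, y]
  have e2 : (fun t : ℝ => psiH (z + (t:ℂ) * Complex.I) ^ a)
      = fun t : ℝ => ((x^2 + (y + t)^2 + 1)/(y + t)) ^ a := by
    funext t; simp [psiH, x, y]
  rw [hypLaplacian, e1, e2, barrier_deriv2_x a x y hy, barrier_deriv2_y a x y hy]
  set P := (x^2 + y^2 + 1)/y with hPdef
  have hPpos : 0 < P := psiH_pos hz
  have hP2 : 2 ≤ P := psiH_ge_two hz
  have hA2 : (0:ℝ) < P ^ (a-2) := Real.rpow_pos_of_pos hPpos _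
  have ea1 : P ^ (a-1) = P ^ (a-2) * P := by
    rw [show a-1 = (a-2)+1 by ring, Real.rpow_add hPpos, Real.rpow_one]
  have ea0 : P ^ a = P ^ (a-2) * P^2 := by
    rw [← Real.rpow_natCast P 2, ← Real.rpow_add hPpos]
    push_cast
    ring_nf
  have hpsi : psiH z = P := rfl
  rw [hpsi, ea1, ea0]
  set A2 := P ^ (a-2)
  have key : 2*a*(A2 * P^2) - y^2 * (a*(a-1) * A2 * (2*x/y)^2 + a * (A2 * P) * (2/y)
        + (a*(a-1) * A2 * ((y^2 - x^2 - 1)/y^2)^2 + a * (A2 * P) * (2*(x^2+1)/y^3)))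
      = A2 * a * (1-a) * (P^2 - 4) := by
    rw [hPdef]
    field_simp
    ring
  nlinarith [mul_nonneg (mul_nonneg (mul_nonneg hA2.le ha.le) (by linarith : (0:ℝ) ≤ 1-a))
    (by nlinarith : (0:ℝ) ≤ P^2 - 4)]

lemma isOpen_UpperH : IsOpen UpperH := isOpen_lt continuous_const Complex.continuous_im

/-- The barrier's directional restrictions are C². -/
lemma barrier_dir1_contDiffAt (a : ℝ) {z : ℂ} (hz : z ∈ UpperH) :
    ContDiffAt ℝ 2 (fun t : ℝ => psiH (z + (t:ℂ)) ^ a) 0 := by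
  have hy : 0 < z.im := hz
  have e1 : (fun t : ℝ => psiH (z + (t:ℂ)) ^ a)
      = fun t : ℝ => (((z.re + t)^2 + z.im^2 + 1)/z.im) ^ a := by
    funext t; simp [psiH]
  rw [e1]
  have hbase : ContDiff ℝ 2 (fun t : ℝ => ((z.re + t)^2 + z.im^2 + 1)/z.im) := by
    apply ContDiff.div_const
    have h1 : ContDiff ℝ 2 (fun t : ℝ => z.re + t) := contDiff_const.add contDiff_id
    exact ((h1.pow 2).add contDiff_const).add contDiff_const
  apply hbase.contDiffAt.rpow_const_of_ne
  have : 0 < ((z.re + 0)^2 + z.im^2 + 1)/z.im := div_pos (by positivity) hy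
  exact this.ne'

lemma barrier_dir2_contDiffAt (a : ℝ) {z : ℂ} (hz : z ∈ UpperH) :
    ContDiffAt ℝ 2 (fun t : ℝ => psiH (z + (t:ℂ) * Complex.I) ^ a) 0 := by
  have hy : 0 < z.im := hz
  have e2 : (fun t : ℝ => psiH (z + (t:ℂ) * Complex.I) ^ a)
      = fun t : ℝ => ((z.re^2 + (z.im + t)^2 + 1)/(z.im + t)) ^ a := by
    funext t; simp [psiH]
  rw [e2]
  have hnum : ContDiffAt ℝ 2 (fun t : ℝ => z.re^2 + (z.im + t)^2 + 1) 0 :=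
    ((contDiff_const.add ((contDiff_const.add contDiff_id).pow 2)).add contDiff_const).contDiffAt
  have hden : ContDiffAt ℝ 2 (fun t : ℝ => z.im + t) 0 :=
    (contDiff_const.add contDiff_id).contDiffAt
  have hq : ContDiffAt ℝ 2 (fun t : ℝ => (z.re^2 + (z.im + t)^2 + 1)/(z.im + t)) 0 :=
    hnum.div hden (by simpa using hy.ne')
  apply hq.rpow_const_of_ne
  have : 0 < (z.re^2 + (z.im + 0)^2 + 1)/(z.im + 0) := div_pos (by positivity) (by simpa using hy)
  exact this.ne'

/-- Directional restrictions of a `C²` function on `UpperH` are `C²`. -/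
lemma dir1_contDiffAt {u : ℂ → ℝ} (hu : ContDiffOn ℝ 2 u UpperH) {z : ℂ} (hz : z ∈ UpperH) :
    ContDiffAt ℝ 2 (fun t : ℝ => u (z + (t:ℂ))) 0 := by
  have huz : ContDiffAt ℝ 2 u z := hu.contDiffAt (isOpen_UpperH.mem_nhds hz)
  have hφ : ContDiff ℝ 2 (fun t : ℝ => z + (t:ℂ)) :=
    contDiff_const.add Complex.ofRealCLM.contDiff
  have huz' : ContDiffAt ℝ 2 u ((fun t : ℝ => z + (t:ℂ)) 0) := by simpa using huz
  have hcomp : ContDiffAt ℝ 2 (u ∘ fun t : ℝ => z + (t:ℂ)) 0 :=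
    ContDiffAt.comp 0 huz' hφ.contDiffAt
  simpa [Function.comp_def] using hcomp

lemma dir2_contDiffAt {u : ℂ → ℝ} (hu : ContDiffOn ℝ 2 u UpperH) {z : ℂ} (hz : z ∈ UpperH) :
    ContDiffAt ℝ 2 (fun t : ℝ => u (z + (t:ℂ) * Complex.I)) 0 := by
  have huz : ContDiffAt ℝ 2 u z := hu.contDiffAt (isOpen_UpperH.mem_nhds hz)
  have hφ : ContDiff ℝ 2 (fun t : ℝ => z + (t:ℂ) * Complex.I) := by
    apply contDiff_const.add
    exact Complex.ofRealCLM.contDiff.mul contDiff_const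
  have huz' : ContDiffAt ℝ 2 u ((fun t : ℝ => z + (t:ℂ) * Complex.I) 0) := by simpa using huz
  have hcomp : ContDiffAt ℝ 2 (u ∘ fun t : ℝ => z + (t:ℂ) * Complex.I) 0 :=
    ContDiffAt.comp 0 huz' hφ.contDiffAt
  simpa [Function.comp_def] using hcomp

/-- Linearity of the hyperbolic Laplacian: `Δ(w) = Δ(w - εB) + ε Δ(B)` pointwise. -/
lemma hypLap_split {w B : ℂ → ℝ} (ε : ℝ) {z : ℂ} (hz : z ∈ UpperH)
    (hw1 : ContDiffAt ℝ 2 (fun t : ℝ => w (z + (t:ℂ))) 0)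
    (hw2 : ContDiffAt ℝ 2 (fun t : ℝ => w (z + (t:ℂ) * Complex.I)) 0)
    (hB1 : ContDiffAt ℝ 2 (fun t : ℝ => B (z + (t:ℂ))) 0)
    (hB2 : ContDiffAt ℝ 2 (fun t : ℝ => B (z + (t:ℂ) * Complex.I)) 0) :
    hypLaplacian w z = hypLaplacian (fun ζ => w ζ - ε * B ζ) z + ε * hypLaplacian B z := by
  have l1 : iteratedDeriv 2 (fun t : ℝ => w (z + (t:ℂ)) - ε * B (z + (t:ℂ))) 0
      = iteratedDeriv 2 (fun t : ℝ => w (z + (t:ℂ))) 0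
        - ε * iteratedDeriv 2 (fun t : ℝ => B (z + (t:ℂ))) 0 :=
    iteratedDeriv_two_sub_const_mul ε hw1 hB1
  have l2 : iteratedDeriv 2 (fun t : ℝ => w (z + (t:ℂ) * Complex.I)
        - ε * B (z + (t:ℂ) * Complex.I)) 0
      = iteratedDeriv 2 (fun t : ℝ => w (z + (t:ℂ) * Complex.I)) 0
        - ε * iteratedDeriv 2 (fun t : ℝ => B (z + (t:ℂ) * Complex.I)) 0 :=
    iteratedDeriv_two_sub_const_mul ε hw2 hB2
  simp only [hypLaplacian]
  rw [l1, l2]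
  ring

lemma isCompact_rect {R : ℝ} (hR : 0 < R) :
    IsCompact {z : ℂ | |z.re| ≤ R ∧ 1/R ≤ z.im ∧ z.im ≤ R} := by
  apply Metric.isCompact_of_isClosed_isBounded
  · have h1 : IsClosed {z : ℂ | |z.re| ≤ R} :=
      isClosed_le (continuous_abs.comp Complex.continuous_re) continuous_const
    have h2 : IsClosed {z : ℂ | 1/R ≤ z.im} := isClosed_le continuous_const Complex.continuous_im
    have h3 : IsClosed {z : ℂ | z.im ≤ R} := isClosed_le Complex.continuous_im continuous_const
    exact h1.inter (h2.inter h3)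
  · apply (Metric.isBounded_closedBall (x := (0:ℂ)) (r := 2*R)).subset
    intro z hz
    rw [Metric.mem_closedBall, Complex.dist_eq, sub_zero]
    calc ‖z‖ ≤ |z.re| + |z.im| := Complex.norm_le_abs_re_add_abs_im z
    _ ≤ R + R := add_le_add hz.1 (by rw [abs_of_nonneg (le_trans (le_of_lt (by positivity)) hz.2.1)]; exact hz.2.2)
    _ = 2*R := by ring

/-- Maximum principle on the upper half-plane for bounded functions satisfying
`Δ w ≥ c w` where `w > 0`. -/
lemma max_principle (w : ℂ → ℝ) (M c : ℝ) (hc : 0 < c)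
    (hw : ContDiffOn ℝ 2 w UpperH)
    (hbdd : ∀ z ∈ UpperH, |w z| ≤ M)
    (hineq : ∀ z ∈ UpperH, 0 < w z → c * w z ≤ hypLaplacian w z) :
    ∀ z ∈ UpperH, w z ≤ 0 := by
  by_contra hcon
  push_neg at hcon
  obtain ⟨z₁, hz₁, hwz₁⟩ := hcon
  set a : ℝ := min 1 (c/4) with hadef
  have ha : 0 < a := lt_min one_pos (by positivity)
  have ha1 : a ≤ 1 := min_le_left _ _
  have ha2 : 2*a < c := by
    have h := min_le_right 1 (c/4)
    nlinarith
  set B : ℂ → ℝ := fun ζ => psiH ζ ^ a with hBdef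
  have hBpos : ∀ ζ ∈ UpperH, 0 < B ζ := fun ζ hζ => Real.rpow_pos_of_pos (psiH_pos hζ) a
  set ε : ℝ := w z₁ / (2 * B z₁) with hεdef
  have hB1pos : 0 < B z₁ := hBpos z₁ hz₁
  have hεpos : 0 < ε := div_pos hwz₁ (by positivity)
  set g : ℂ → ℝ := fun ζ => w ζ - ε * B ζ with hgdef
  have hg1 : g z₁ = w z₁ / 2 := by
    show w z₁ - ε * B z₁ = w z₁ / 2
    rw [hεdef]
    have hne := hB1pos.ne'
    field_simp
    ring
  have hg1pos : 0 < g z₁ := by rw [hg1]; positivity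
  have hM : 0 < M := lt_of_lt_of_le hwz₁ (le_trans (le_abs_self _) (hbdd z₁ hz₁))
  set T : ℝ := M/ε + 1 with hTdef
  have hT : 0 < T := by positivity
  set R : ℝ := max (max (psiH z₁) (T ^ a⁻¹)) 2 with hRdef
  have hRpos : (0:ℝ) < R := lt_of_lt_of_le two_pos (le_max_right _ _)
  -- outside the compact rectangle, g is below g z₁
  have hout : ∀ ζ ∈ UpperH, R < psiH ζ → g ζ < g z₁ := by
    intro ζ hζ hRζ
    have hTa : (T ^ a⁻¹) ^ a = T := by
      rw [← Real.rpow_mul hT.le, inv_mul_cancel₀ ha.ne', Real.rpow_one]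
    have hlt : T < B ζ := by
      rw [hBdef, ← hTa]
      apply Real.rpow_lt_rpow (Real.rpow_nonneg hT.le _) _ ha
      exact lt_of_le_of_lt (le_trans (le_max_right _ _) (le_max_left _ _)) hRζ
    have : M < ε * B ζ := by
      have : ε * T = M + ε := by rw [hTdef]; field_simp
      nlinarith
    have hwb : w ζ ≤ M := le_trans (le_abs_self _) (hbdd ζ hζ)
    have : g ζ < 0 := by show w ζ - ε * B ζ < 0; linarith
    linarith
  set K : Set ℂ := {z : ℂ | |z.re| ≤ R ∧ 1/R ≤ z.im ∧ z.im ≤ R} with hKdef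
  have hKU : K ⊆ UpperH := fun ζ hζ => lt_of_lt_of_le (by positivity) hζ.2.1
  have hKin : ∀ ζ ∈ UpperH, psiH ζ ≤ R → ζ ∈ K := fun ζ hζ h => psiH_bounds hζ h
  have hz₁K : z₁ ∈ K := hKin z₁ hz₁ (le_trans (le_max_left _ _) (le_max_left _ _))
  -- continuity of g on K
  have hgcont : ContinuousOn g K := by
    apply ContinuousOn.sub
    · exact (hw.continuousOn).mono hKU
    · apply ContinuousOn.mul continuousOn_const
      exact ((psiH_continuousOn.rpow_const
        (fun ζ hζ => Or.inl (psiH_pos hζ).ne')).mono hKU)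
  obtain ⟨zs, hzsK, hmax⟩ := (isCompact_rect hRpos).exists_isMaxOn ⟨z₁, hz₁K⟩ hgcont
  have hzsU : zs ∈ UpperH := hKU hzsK
  have hglobal : ∀ ζ ∈ UpperH, g ζ ≤ g zs := by
    intro ζ hζ
    by_cases hK : ζ ∈ K
    · exact hmax hK
    · have hRζ : R < psiH ζ := by
        by_contra h
        exact hK (hKin ζ hζ (not_lt.mp h))
      exact le_trans (hout ζ hζ hRζ).le (hmax hz₁K)
  -- local max in both directions
  have hloc1 : IsLocalMax (fun t : ℝ => g (zs + (t:ℂ))) 0 := by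
    have hcont : Continuous (fun t : ℝ => zs + (t:ℂ)) :=
      continuous_const.add Complex.continuous_ofReal
    have hev : ∀ᶠ t : ℝ in 𝓝 0, zs + (t:ℂ) ∈ UpperH :=
      hcont.continuousAt.eventually_mem (isOpen_UpperH.mem_nhds (by simpa using hzsU))
    filter_upwards [hev] with t ht
    exact le_of_le_of_eq (hglobal _ ht) (by norm_num)
  have hloc2 : IsLocalMax (fun t : ℝ => g (zs + (t:ℂ) * Complex.I)) 0 := by
    have hcont : Continuous (fun t : ℝ => zs + (t:ℂ) * Complex.I) :=
      continuous_const.add (Complex.continuous_ofReal.mul continuous_const)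
    have hev : ∀ᶠ t : ℝ in 𝓝 0, zs + (t:ℂ) * Complex.I ∈ UpperH :=
      hcont.continuousAt.eventually_mem (isOpen_UpperH.mem_nhds (by simpa using hzsU))
    filter_upwards [hev] with t ht
    exact le_of_le_of_eq (hglobal _ ht) (by norm_num)
  -- C² of directional restrictions
  have hw1 := dir1_contDiffAt hw hzsU
  have hw2 := dir2_contDiffAt hw hzsU
  have hB1 : ContDiffAt ℝ 2 (fun t : ℝ => B (zs + (t:ℂ))) 0 := barrier_dir1_contDiffAt a hzsU
  have hB2 : ContDiffAt ℝ 2 (fun t : ℝ => B (zs + (t:ℂ) * Complex.I)) 0 :=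
    barrier_dir2_contDiffAt a hzsU
  have hg1' : ContDiffAt ℝ 2 (fun t : ℝ => g (zs + (t:ℂ))) 0 :=
    hw1.sub (contDiffAt_const.mul hB1)
  have hg2' : ContDiffAt ℝ 2 (fun t : ℝ => g (zs + (t:ℂ) * Complex.I)) 0 :=
    hw2.sub (contDiffAt_const.mul hB2)
  have hd1 : iteratedDeriv 2 (fun t : ℝ => g (zs + (t:ℂ))) 0 ≤ 0 :=
    second_deriv_nonpos hg1' hloc1
  have hd2 : iteratedDeriv 2 (fun t : ℝ => g (zs + (t:ℂ) * Complex.I)) 0 ≤ 0 :=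
    second_deriv_nonpos hg2' hloc2
  have hgLap : hypLaplacian g zs ≤ 0 := by
    rw [hypLaplacian]
    apply mul_nonpos_of_nonneg_of_nonpos (sq_nonneg _)
    linarith
  have hsplit : hypLaplacian w zs = hypLaplacian g zs + ε * hypLaplacian B zs :=
    hypLap_split ε hzsU hw1 hw2 hB1 hB2
  have hBLap : hypLaplacian B zs ≤ 2 * a * psiH zs ^ a := barrier_hypLap ha ha1 hzsU
  have hBzs : B zs = psiH zs ^ a := rfl
  have hgzs : g z₁ ≤ g zs := hmax hz₁K
  have hwzs : 0 < w zs := by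
    have := hBpos zs hzsU
    have h2 : g zs ≤ w zs - 0 := by
      show w zs - ε * B zs ≤ w zs - 0
      have := mul_pos hεpos (hBpos zs hzsU)
      linarith
    linarith
  have hmain := hineq zs hzsU hwzs
  have hεB : ε * B zs < w zs := by
    have : g zs = w zs - ε * B zs := rfl
    linarith
  have hεBpos : 0 < ε * B zs := mul_pos hεpos (hBpos zs hzsU)
  -- combine
  have hchain : c * w zs ≤ 2 * a * (ε * B zs) := by
    calc c * w zs ≤ hypLaplacian w zs := hmain
    _ = hypLaplacian g zs + ε * hypLaplacian B zs := hsplit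
    _ ≤ 0 + ε * (2 * a * psiH zs ^ a) := by
        apply add_le_add hgLap
        exact mul_le_mul_of_nonneg_left hBLap hεpos.le
    _ = 2 * a * (ε * B zs) := by rw [hBzs]; ring
  nlinarith

/-- One-sided comparison for solutions of the Gauss equation. -/
lemma one_sided
    (η : ℝ) (hη : η ∈ Set.Ioo (0 : ℝ) 1)
    (f : ℂ → ℝ) (hf_nonneg : ∀ z ∈ UpperH, 0 ≤ f z)
    (u v : ℂ → ℝ)
    (hu_smooth : ContDiffOn ℝ 2 u UpperH)
    (hv_smooth : ContDiffOn ℝ 2 v UpperH)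
    (Mu Mv : ℝ)
    (hu_bdd : ∀ z ∈ UpperH, |u z| ≤ Mu)
    (hv_bdd : ∀ z ∈ UpperH, |v z| ≤ Mv)
    (hu_eq : ∀ z ∈ UpperH,
      hypLaplacian u z = 2 * Real.exp (2 * u z) - 1 + Real.exp (-4 * u z) * f z)
    (hv_eq : ∀ z ∈ UpperH,
      hypLaplacian v z = 2 * Real.exp (2 * v z) - 1 + Real.exp (-4 * v z) * f z)
    (hv_small : ∀ z ∈ UpperH, Real.exp (-6 * v z) * f z ≤ η) :
    ∀ z ∈ UpperH, u z - v z ≤ 0 := by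
  obtain ⟨hη0, hη1⟩ := hη
  set c : ℝ := 4 * (1 - η) * Real.exp (-(2*Mv)) with hcdef
  have hc : 0 < c := by
    have : 0 < 1 - η := by linarith
    positivity
  apply max_principle (fun z => u z - v z) (Mu + Mv) c hc (hu_smooth.sub hv_smooth)
  · intro z hz
    calc |u z - v z| ≤ |u z| + |v z| := abs_sub _ _
    _ ≤ Mu + Mv := add_le_add (hu_bdd z hz) (hv_bdd z hz)
  · intro z hz hpos
    set w : ℝ := u z - v z with hwdef
    -- Laplacian of the difference
    have hsplit := hypLap_split (w := u) (B := v) 1 hz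
      (dir1_contDiffAt hu_smooth hz) (dir2_contDiffAt hu_smooth hz)
      (dir1_contDiffAt hv_smooth hz) (dir2_contDiffAt hv_smooth hz)
    simp only [one_mul] at hsplit
    have hLap : hypLaplacian (fun ζ => u ζ - v ζ) z
        = hypLaplacian u z - hypLaplacian v z := by linarith
    rw [hLap, hu_eq z hz, hv_eq z hz]
    -- convexity estimates
    have hexp1 : Real.exp (2 * v z) * (1 + 2*w) ≤ Real.exp (2 * u z) := by
      have h := Real.add_one_le_exp (2*w)
      have e1 : Real.exp (2*u z) = Real.exp (2*v z) * Real.exp (2*w) := by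
        rw [← Real.exp_add]; congr 1; rw [hwdef]; ring
      rw [e1]
      have := mul_le_mul_of_nonneg_left h (Real.exp_pos (2*v z)).le
      linarith
    have hexp2 : Real.exp (-4 * v z) * (1 - 4*w) ≤ Real.exp (-4 * u z) := by
      have h := Real.add_one_le_exp (-(4*w))
      have e2 : Real.exp (-4*u z) = Real.exp (-4*v z) * Real.exp (-(4*w)) := by
        rw [← Real.exp_add]; congr 1; rw [hwdef]; ring
      rw [e2]
      have := mul_le_mul_of_nonneg_left h (Real.exp_pos (-4*v z)).le
      linarith
    have h3 : Real.exp (-4 * v z) * f z ≤ η * Real.exp (2 * v z) := by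
      have e3 : Real.exp (-4*v z) = Real.exp (2*v z) * Real.exp (-6*v z) := by
        rw [← Real.exp_add]; congr 1; ring
      have := mul_le_mul_of_nonneg_left (hv_small z hz) (Real.exp_pos (2*v z)).le
      calc Real.exp (-4*v z) * f z
          = Real.exp (2*v z) * (Real.exp (-6*v z) * f z) := by rw [e3]; ring
      _ ≤ Real.exp (2*v z) * η := this
      _ = η * Real.exp (2*v z) := by ring
    have h4 : Real.exp (-(2*Mv)) ≤ Real.exp (2 * v z) := by
      apply Real.exp_le_exp.mpr
      have := (abs_le.mp (hv_bdd z hz)).1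
      linarith
    have hfz : 0 ≤ f z := hf_nonneg z hz
    have k1 : 4 * Real.exp (2*v z) * w ≤ 2*Real.exp (2*u z) - 2*Real.exp (2*v z) := by
      nlinarith [hexp1]
    have k2 : -4 * (Real.exp (-4*v z) * f z) * w
        ≤ Real.exp (-4*u z) * f z - Real.exp (-4*v z) * f z := by
      nlinarith [mul_le_mul_of_nonneg_right hexp2 hfz]
    have k3 : Real.exp (-4*v z) * f z * w ≤ η * Real.exp (2*v z) * w :=
      mul_le_mul_of_nonneg_right h3 hpos.le
    have k4 : c * w ≤ 4*(1-η) * Real.exp (2*v z) * w := by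
      have h5 := mul_le_mul_of_nonneg_right h4 hpos.le
      nlinarith [mul_le_mul_of_nonneg_left h5 (show (0:ℝ) ≤ 4*(1-η) by linarith)]
    linarith

/-- Uniqueness of bounded `C²` solutions of the Gauss equation
`Δ_ℍ u = 2e^{2u} − 1 + e^{−4u} f` satisfying `e^{−6u} f ≤ η`. -/
theorem gauss_equation_unique
    (η : ℝ) (hη : η ∈ Set.Ioo (0 : ℝ) 1)
    (f : ℂ → ℝ) (hf_cont : ContinuousOn f UpperH)
    (hf_nonneg : ∀ z ∈ UpperH, 0 ≤ f z)
    (u v : ℂ → ℝ)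
    (hu_smooth : ContDiffOn ℝ 2 u UpperH)
    (hv_smooth : ContDiffOn ℝ 2 v UpperH)
    (hu_bdd : ∃ M : ℝ, ∀ z ∈ UpperH, |u z| ≤ M)
    (hv_bdd : ∃ M : ℝ, ∀ z ∈ UpperH, |v z| ≤ M)
    (hu_eq : ∀ z ∈ UpperH,
      hypLaplacian u z = 2 * Real.exp (2 * u z) - 1 + Real.exp (-4 * u z) * f z)
    (hv_eq : ∀ z ∈ UpperH,
      hypLaplacian v z = 2 * Real.exp (2 * v z) - 1 + Real.exp (-4 * v z) * f z)
    (hu_small : ∀ z ∈ UpperH, Real.exp (-6 * u z) * f z ≤ η)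
    (hv_small : ∀ z ∈ UpperH, Real.exp (-6 * v z) * f z ≤ η) :
    ∀ z ∈ UpperH, u z = v z := by
  obtain ⟨Mu, hMu⟩ := hu_bdd
  obtain ⟨Mv, hMv⟩ := hv_bdd
  have h1 := one_sided η hη f hf_nonneg u v hu_smooth hv_smooth Mu Mv hMu hMv
    hu_eq hv_eq hv_small
  have h2 := one_sided η hη f hf_nonneg v u hv_smooth hu_smooth Mv Mu hMv hMu
    hv_eq hu_eq hu_small
  intro z hz
  have := h1 z hz
  have := h2 z hz
  linarith
end

section
/- Let m > 0 and let c : ℍ → ℝ be a continuous function with c(z) ≥ m for all z. If w : ℍ → ℝ is a bounded C² function satisfying the differential inequality Δ_ℍ w(z) ≥ c(z) · w(z) for all z ∈ ℍ, then w(z) ≤ 0 for all z ∈ ℍ. -/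
open Filter Topology

/-! ### Auxiliary 1D calculus lemmas -/

/-- Second derivative test: at an interior local max, `f'' ≤ 0`. -/
lemma locmax_secondDeriv_nonpos (f : ℝ → ℝ)
    (hf : ∀ᶠ t in 𝓝 (0:ℝ), DifferentiableAt ℝ f t)
    (hf2 : DifferentiableAt ℝ (deriv f) 0)
    (hmax : IsLocalMax f 0) :
    deriv (deriv f) 0 ≤ 0 := by
  by_contra hpos
  push_neg at hpos
  set d := deriv (deriv f) 0 with hd
  have h0 : deriv f 0 = 0 := hmax.deriv_eq_zero
  have hslope : Tendsto (slope (deriv f) 0) (𝓝[≠] 0) (𝓝 d) :=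
    (hasDerivAt_iff_tendsto_slope.1 hf2.hasDerivAt)
  have hev : ∀ᶠ t in 𝓝[≠] (0:ℝ), 0 < slope (deriv f) 0 t :=
    hslope.eventually (eventually_gt_nhds hpos)
  have hmax' : ∀ᶠ t in 𝓝 (0:ℝ), f t ≤ f 0 := hmax
  obtain ⟨δ, hδ, hball⟩ := Metric.eventually_nhds_iff.1 (hf.and hmax')
  obtain ⟨s, hs, hsall⟩ := hev.exists_mem
  obtain ⟨δ', hδ', hball'⟩ := Metric.mem_nhdsWithin_iff.1 hs
  set r := min δ δ' / 2 with hr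
  have hr0 : 0 < r := by positivity
  have hrδ : r < δ := by
    have h1 : min δ δ' ≤ δ := min_le_left δ δ'
    have h2 : 0 < min δ δ' := lt_min hδ hδ'
    simp only [hr]; linarith
  have hrδ' : r < δ' := by
    have h1 : min δ δ' ≤ δ' := min_le_right δ δ'
    have h2 : 0 < min δ δ' := lt_min hδ hδ'
    simp only [hr]; linarith
  have hderivpos : ∀ t ∈ Set.Ioo (0:ℝ) r, 0 < deriv f t := by
    intro t ht
    have htmem : t ∈ Metric.ball (0:ℝ) δ' ∩ {(0:ℝ)}ᶜ := by
      constructor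
      · simp [Real.dist_eq, abs_of_pos ht.1]; linarith [ht.2]
      · simp; exact ne_of_gt ht.1
    have := hsall t (hball' htmem)
    rw [slope_def_field] at this
    have h2 : 0 < (deriv f t - deriv f 0) / (t - 0) := by
      simpa [div_eq_inv_mul] using this
    rw [h0] at h2
    rcases (div_pos_iff).1 h2 with ⟨h1, _⟩ | ⟨_, h3⟩
    · simpa using h1
    · linarith [ht.1]
  have hcont : ContinuousOn f (Set.Icc 0 r) := by
    intro t ht
    have : DifferentiableAt ℝ f t := by
      apply (hball (by simp [Real.dist_eq]; rw [abs_of_nonneg ht.1]; linarith [ht.2] :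
        dist t (0:ℝ) < δ)).1
    exact this.continuousAt.continuousWithinAt
  have hmono : StrictMonoOn f (Set.Icc 0 r) := by
    apply strictMonoOn_of_deriv_pos (convex_Icc 0 r) hcont
    intro t ht
    rw [interior_Icc] at ht
    exact hderivpos t ht
  have hlt : f 0 < f r := hmono (Set.left_mem_Icc.2 hr0.le) (Set.right_mem_Icc.2 hr0.le) hr0
  have hle : f r ≤ f 0 := (hball (by simp [Real.dist_eq, abs_of_pos hr0]; exact hrδ)).2
  linarith

lemma deriv_eventuallyEq_of_hasDerivAt {g g1 : ℝ → ℝ}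
    (hg : ∀ᶠ t in 𝓝 (0:ℝ), HasDerivAt g (g1 t) t) :
    deriv g =ᶠ[𝓝 (0:ℝ)] g1 :=
  hg.mono fun _ ht => ht.deriv

lemma iteratedDeriv_two_eq {g g1 : ℝ → ℝ} {d : ℝ}
    (hg : ∀ᶠ t in 𝓝 (0:ℝ), HasDerivAt g (g1 t) t)
    (hg1 : HasDerivAt g1 d 0) :
    iteratedDeriv 2 g 0 = d := by
  have h1 : deriv g =ᶠ[𝓝 (0:ℝ)] g1 := deriv_eventuallyEq_of_hasDerivAt hg
  have h2 : iteratedDeriv 2 g 0 = deriv (deriv g) 0 := by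
    rw [show (2:ℕ) = 1 + 1 from rfl, iteratedDeriv_succ, iteratedDeriv_one]
  rw [h2, h1.deriv_eq]
  exact hg1.deriv

lemma iteratedDeriv_two_sub {f g g1 : ℝ → ℝ} {e : ℝ}
    (hf : ∀ᶠ t in 𝓝 (0:ℝ), DifferentiableAt ℝ f t)
    (hf2 : DifferentiableAt ℝ (deriv f) 0)
    (hg : ∀ᶠ t in 𝓝 (0:ℝ), HasDerivAt g (g1 t) t)
    (hg1 : DifferentiableAt ℝ g1 0) :
    iteratedDeriv 2 (fun t => f t - e * g t) 0
      = iteratedDeriv 2 f 0 - e * iteratedDeriv 2 g 0 := by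
  have h2 : iteratedDeriv 2 g 0 = deriv g1 0 := by
    rw [show (2:ℕ) = 1 + 1 from rfl, iteratedDeriv_succ, iteratedDeriv_one,
      (deriv_eventuallyEq_of_hasDerivAt hg).deriv_eq]
  have hF1 : (fun t => deriv (fun t => f t - e * g t) t) =ᶠ[𝓝 (0:ℝ)]
      (fun t => deriv f t - e * g1 t) := by
    filter_upwards [hf, hg] with t htf htg
    rw [deriv_fun_sub htf ((htg.differentiableAt).const_mul e)]
    congr 1
    rw [deriv_const_mul e htg.differentiableAt, htg.deriv]
  have hiter : iteratedDeriv 2 (fun t => f t - e * g t) 0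
      = deriv (fun t => deriv f t - e * g1 t) 0 := by
    rw [show (2:ℕ) = 1 + 1 from rfl, iteratedDeriv_succ, iteratedDeriv_one, hF1.deriv_eq]
  rw [hiter, deriv_fun_sub hf2 (hg1.const_mul e), deriv_const_mul e hg1, h2,
    show (2:ℕ) = 1 + 1 from rfl, iteratedDeriv_succ, iteratedDeriv_one]

/-- Combined: local max of `f - e•g` forces the second-derivative inequality. -/
lemma combined_secondDeriv_le {f g g1 : ℝ → ℝ} {e : ℝ}
    (hf : ∀ᶠ t in 𝓝 (0:ℝ), DifferentiableAt ℝ f t)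
    (hf2 : DifferentiableAt ℝ (deriv f) 0)
    (hg : ∀ᶠ t in 𝓝 (0:ℝ), HasDerivAt g (g1 t) t)
    (hg1 : DifferentiableAt ℝ g1 0)
    (hmax : IsLocalMax (fun t => f t - e * g t) 0) :
    iteratedDeriv 2 f 0 - e * iteratedDeriv 2 g 0 ≤ 0 := by
  rw [← iteratedDeriv_two_sub hf hf2 hg hg1]
  have hFdiff : ∀ᶠ t in 𝓝 (0:ℝ), DifferentiableAt ℝ (fun t => f t - e * g t) t := by
    filter_upwards [hf, hg] with t htf htg
    exact htf.sub (htg.differentiableAt.const_mul e)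
  have hF1 : (fun t => deriv (fun t => f t - e * g t) t) =ᶠ[𝓝 (0:ℝ)]
      (fun t => deriv f t - e * g1 t) := by
    filter_upwards [hf, hg] with t htf htg
    rw [deriv_fun_sub htf ((htg.differentiableAt).const_mul e)]
    congr 1
    rw [deriv_const_mul e htg.differentiableAt, htg.deriv]
  have hF2 : DifferentiableAt ℝ (deriv (fun t => f t - e * g t)) 0 := by
    rw [Filter.EventuallyEq.differentiableAt_iff hF1]
    exact hf2.sub (hg1.const_mul e)
  have h := locmax_secondDeriv_nonpos _ hFdiff hF2 hmax
  rwa [show (2:ℕ) = 1 + 1 from rfl, iteratedDeriv_succ, iteratedDeriv_one]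

/-! ### The barrier function -/

noncomputable def barrierQ (a b : ℝ) (z : ℂ) : ℝ :=
  1 + ((z.re - a)^2 + (z.im - b)^2)/(2*b*z.im)

noncomputable def barrierG (a b κ : ℝ) (z : ℂ) : ℝ :=
  1 + κ * Real.log (barrierQ a b z)

lemma barrierQ_ge_one {a b : ℝ} {z : ℂ} (hb : 0 < b) (hz : 0 < z.im) :
    1 ≤ barrierQ a b z := by
  unfold barrierQ
  have : 0 ≤ ((z.re - a)^2 + (z.im - b)^2)/(2*b*z.im) := by positivity
  linarith

lemma barrierG_ge_one {a b κ : ℝ} (hκ : 0 ≤ κ) {z : ℂ} (hb : 0 < b) (hz : 0 < z.im) :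
    1 ≤ barrierG a b κ z := by
  unfold barrierG
  have h1 := barrierQ_ge_one (a := a) hb hz
  have h2 : 0 ≤ Real.log (barrierQ a b z) := Real.log_nonneg h1
  nlinarith

lemma barrierG_self {a b κ : ℝ} {z : ℂ} (ha : z.re = a) (hb' : z.im = b) :
    barrierG a b κ z = 1 := by
  simp [barrierG, barrierQ, ha, hb']

lemma barrierG_continuousAt {a b κ : ℝ} (hb : 0 < b) {z : ℂ} (hz : 0 < z.im) :
    ContinuousAt (barrierG a b κ) z := by
  have hq : ContinuousAt (barrierQ a b) z := by
    apply ContinuousAt.add continuousAt_const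
    apply ContinuousAt.div (by fun_prop) (by fun_prop)
    positivity
  have h1 : 1 ≤ barrierQ a b z := barrierQ_ge_one hb hz
  exact continuousAt_const.add
    (((Real.continuousAt_log (by linarith)).comp hq).const_mul κ)

/-! x-direction line functions -/

noncomputable def qxline (a b x y : ℝ) : ℝ → ℝ :=
  fun t => 1 + ((x + t - a)^2 + (y - b)^2)/(2*b*y)

noncomputable def qxline' (a b x y : ℝ) : ℝ → ℝ :=
  fun t => (x + t - a)/(b*y)

lemma xline_hasDeriv {a b x y : ℝ} (hb : 0 < b) (hy : 0 < y) (t : ℝ) :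
    HasDerivAt (qxline a b x y) (qxline' a b x y t) t := by
  have h1 : HasDerivAt (fun t:ℝ => x + t - a) 1 t :=
    ((hasDerivAt_id t).const_add x).sub_const a
  have h4 := (((h1.pow 2).add_const ((y-b)^2)).div_const (2*b*y)).const_add 1
  refine h4.congr_deriv ?_
  unfold qxline'
  field_simp
  ring

lemma xline_pos {a b x y : ℝ} (hb : 0 < b) (hy : 0 < y) (t : ℝ) :
    1 ≤ qxline a b x y t := by
  unfold qxline
  have : (0:ℝ) ≤ ((x + t - a)^2 + (y - b)^2)/(2*b*y) := by positivity
  linarith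

noncomputable def Gxline (a b κ x y : ℝ) : ℝ → ℝ :=
  fun t => 1 + κ * Real.log (qxline a b x y t)

noncomputable def Gxline' (a b κ x y : ℝ) : ℝ → ℝ :=
  fun t => κ * (qxline' a b x y t / qxline a b x y t)

lemma Gxline_hasDeriv {a b κ x y : ℝ} (hb : 0 < b) (hy : 0 < y) (t : ℝ) :
    HasDerivAt (Gxline a b κ x y) (Gxline' a b κ x y t) t := by
  have hu := xline_hasDeriv (a := a) (x := x) hb hy t
  have hne : qxline a b x y t ≠ 0 := by linarith [xline_pos (a := a) (x := x) hb hy t]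
  have hlog := (Real.hasDerivAt_log hne).comp t hu
  have h := (hlog.const_mul κ).const_add 1
  refine h.congr_deriv ?_
  unfold Gxline'
  field_simp

lemma Gxline'_hasDeriv {a b κ x y : ℝ} (hb : 0 < b) (hy : 0 < y) :
    HasDerivAt (Gxline' a b κ x y)
      (κ * ((1/(b*y)) * qxline a b x y 0 - ((x - a)/(b*y))^2) / (qxline a b x y 0)^2) 0 := by
  have h1 : HasDerivAt (fun t:ℝ => x + t - a) 1 0 :=
    ((hasDerivAt_id 0).const_add x).sub_const a
  have hp : HasDerivAt (qxline' a b x y) (1/(b*y)) 0 := by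
    have := h1.div_const (b*y)
    exact this
  have hu := xline_hasDeriv (a := a) (x := x) hb hy 0
  have hne : qxline a b x y 0 ≠ 0 := by linarith [xline_pos (a := a) (x := x) hb hy 0]
  have hdiv := (hp.div hu hne).const_mul κ
  refine hdiv.congr_deriv ?_
  have h2 : qxline' a b x y 0 = (x - a)/(b*y) := by unfold qxline'; norm_num
  rw [h2]
  ring

/-! y-direction line functions -/

noncomputable def qyline (a b x y : ℝ) : ℝ → ℝ :=
  fun t => 1 + ((x - a)^2 + (y + t - b)^2)/(2*b*(y+t))

noncomputable def qyline' (a b x y : ℝ) : ℝ → ℝ :=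
  fun t => ((y+t)^2 - b^2 - (x-a)^2)/(2*b*(y+t)^2)

lemma yline_hasDeriv {a b x y : ℝ} (hb : 0 < b) {t : ℝ} (hyt : 0 < y + t) :
    HasDerivAt (qyline a b x y) (qyline' a b x y t) t := by
  have hid : HasDerivAt (fun t:ℝ => y + t) 1 t := (hasDerivAt_id t).const_add y
  have hN : HasDerivAt (fun t:ℝ => (x - a)^2 + (y + t - b)^2) (2*(y+t-b)) t := by
    have h1 : HasDerivAt (fun t:ℝ => y + t - b) 1 t := hid.sub_const b
    have := (h1.pow 2).const_add ((x-a)^2)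
    refine this.congr_deriv ?_; ring
  have hD : HasDerivAt (fun t:ℝ => 2*b*(y+t)) (2*b) t := by
    have := hid.const_mul (2*b)
    refine this.congr_deriv ?_; ring
  have hDne : 2*b*(y+t) ≠ 0 := by positivity
  have := (hN.div hD hDne).const_add 1
  refine this.congr_deriv ?_
  unfold qyline'
  field_simp
  ring

lemma yline_pos {a b x y : ℝ} (hb : 0 < b) {t : ℝ} (hyt : 0 < y + t) :
    1 ≤ qyline a b x y t := by
  unfold qyline
  have : (0:ℝ) ≤ ((x - a)^2 + (y + t - b)^2)/(2*b*(y+t)) := by positivity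
  linarith

noncomputable def Gyline (a b κ x y : ℝ) : ℝ → ℝ :=
  fun t => 1 + κ * Real.log (qyline a b x y t)

noncomputable def Gyline' (a b κ x y : ℝ) : ℝ → ℝ :=
  fun t => κ * (qyline' a b x y t / qyline a b x y t)

lemma Gyline_hasDeriv {a b κ x y : ℝ} (hb : 0 < b) {t : ℝ} (hyt : 0 < y + t) :
    HasDerivAt (Gyline a b κ x y) (Gyline' a b κ x y t) t := by
  have hv := yline_hasDeriv (a := a) (x := x) hb hyt
  have hne : qyline a b x y t ≠ 0 := by linarith [yline_pos (a := a) (x := x) hb hyt]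
  have hlog := (Real.hasDerivAt_log hne).comp t hv
  have := (hlog.const_mul κ).const_add 1
  refine this.congr_deriv ?_
  unfold Gyline'
  field_simp

lemma Gyline'_hasDeriv {a b κ x y : ℝ} (hb : 0 < b) (hy : 0 < y) :
    HasDerivAt (Gyline' a b κ x y)
      (κ * (((b^2 + (x-a)^2)/(b*y^3)) * qyline a b x y 0
            - ((y^2 - b^2 - (x-a)^2)/(2*b*y^2))^2) / (qyline a b x y 0)^2) 0 := by
  have hid : HasDerivAt (fun t:ℝ => y + t) 1 0 := (hasDerivAt_id 0).const_add y
  have hy0 : (0:ℝ) < y + 0 := by linarith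
  have hNc : HasDerivAt (fun t:ℝ => (y+t)^2 - b^2 - (x-a)^2) (2*(y+0)) 0 := by
    have := ((hid.pow 2).sub_const (b^2)).sub_const ((x-a)^2)
    refine this.congr_deriv ?_; ring
  have hDc : HasDerivAt (fun t:ℝ => 2*b*(y+t)^2) (2*b*(2*(y+0))) 0 := by
    have := (hid.pow 2).const_mul (2*b)
    refine this.congr_deriv ?_; ring
  have hDcne : 2*b*(y+0)^2 ≠ 0 := by positivity
  have hc : HasDerivAt (qyline' a b x y)
      ((2*(y+0) * (2*b*(y+0)^2) - ((y+0)^2 - b^2 - (x-a)^2) * (2*b*(2*(y+0))))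
        / (2*b*(y+0)^2)^2) 0 := hNc.div hDc hDcne
  have hv := yline_hasDeriv (a := a) (x := x) hb hy0
  have hvne : qyline a b x y 0 ≠ 0 := by linarith [yline_pos (a := a) (x := x) hb hy0]
  have hdiv := (hc.div hv hvne).const_mul κ
  refine hdiv.congr_deriv ?_
  have h1 : qyline' a b x y 0 = (y^2 - b^2 - (x-a)^2)/(2*b*y^2) := by
    unfold qyline'; norm_num
  have h2 : (2*(y+0) * (2*b*(y+0)^2) - ((y+0)^2 - b^2 - (x-a)^2) * (2*b*(2*(y+0))))
        / (2*b*(y+0)^2)^2 = (b^2 + (x-a)^2)/(b*y^3) := by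
    field_simp
    ring
  rw [h1, h2]
  ring

/-! Identification of the hypLaplacian line functions -/

lemma line_eq_x (a b κ : ℝ) (z : ℂ) :
    (fun t : ℝ => barrierG a b κ (z + (t:ℂ))) = Gxline a b κ z.re z.im := by
  funext t
  simp only [barrierG, barrierQ, Gxline, qxline, Complex.add_re, Complex.add_im,
    Complex.ofReal_re, Complex.ofReal_im, add_zero]

lemma line_eq_y (a b κ : ℝ) (z : ℂ) :
    (fun t : ℝ => barrierG a b κ (z + (t:ℂ) * Complex.I)) = Gyline a b κ z.re z.im := by
  funext t
  simp only [barrierG, barrierQ, Gyline, qyline, Complex.add_re, Complex.add_im,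
    Complex.mul_re, Complex.mul_im, Complex.I_re, Complex.I_im, Complex.ofReal_re,
    Complex.ofReal_im, mul_zero, mul_one, zero_mul, sub_zero, add_zero, zero_add]

lemma qxline_zero {a b : ℝ} (x y : ℝ) (z : ℂ) (hx : z.re = x) (hy : z.im = y) :
    qxline a b x y 0 = barrierQ a b z := by
  simp [qxline, barrierQ, hx, hy]

lemma qyline_zero {a b : ℝ} (x y : ℝ) (z : ℂ) (hx : z.re = x) (hy : z.im = y) :
    qyline a b x y 0 = barrierQ a b z := by
  simp [qyline, barrierQ, hx, hy]

lemma barrier_alg (κ q y A B P R : ℝ) (hq0 : 0 < q)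
    (hqid : y ^ 2 * A + y ^ 2 * B = 2 * q) :
    y^2 * (κ * (A * q - P^2) / q^2 + κ * (B * q - R^2) / q^2)
      = 2 * κ - κ * (y^2 * (P^2 + R^2)) / q^2 := by
  have h := hq0.ne'
  field_simp
  linear_combination (κ*q) * hqid

/-- The key differential inequality for the barrier: `Δ_ℍ G ≤ 2κ`. -/
lemma barrierG_hypLaplacian_le {a b κ : ℝ} (hb : 0 < b) (hκ : 0 ≤ κ)
    {z : ℂ} (hz : 0 < z.im) :
    hypLaplacian (barrierG a b κ) z ≤ 2 * κ := by
  set x := z.re with hxd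
  set y := z.im with hyd
  have hy : 0 < y := hz
  have hevx : ∀ᶠ t in 𝓝 (0:ℝ), HasDerivAt (Gxline a b κ x y) (Gxline' a b κ x y t) t :=
    Eventually.of_forall (Gxline_hasDeriv hb hy)
  have hevy : ∀ᶠ t in 𝓝 (0:ℝ), HasDerivAt (Gyline a b κ x y) (Gyline' a b κ x y t) t := by
    filter_upwards [Ioo_mem_nhds (by linarith : -y < (0:ℝ)) hy] with t ht
    exact Gyline_hasDeriv hb (by linarith [ht.1])
  have hx2 := iteratedDeriv_two_eq hevx (Gxline'_hasDeriv hb hy)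
  have hy2 := iteratedDeriv_two_eq hevy (Gyline'_hasDeriv hb hy)
  unfold hypLaplacian
  rw [line_eq_x, line_eq_y, ← hxd, ← hyd, hx2, hy2,
    qxline_zero x y z rfl rfl, qyline_zero x y z rfl rfl]
  set q := barrierQ a b z with hqd
  have hq1 : 1 ≤ q := barrierQ_ge_one hb hz
  have hq0 : 0 < q := by linarith
  have hqid : y^2 * (1/(b*y)) + y^2 * ((b^2 + (x-a)^2)/(b*y^3)) = 2*q := by
    rw [hqd]
    unfold barrierQ
    rw [← hxd, ← hyd]
    field_simp
    ring
  set P := (x - a)/(b*y) with hPd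
  set R := (y^2 - b^2 - (x-a)^2)/(2*b*y^2) with hRd
  set A := 1/(b*y) with hAd
  set B := (b^2 + (x-a)^2)/(b*y^3) with hBd
  have key : y^2 * (κ * (A * q - P^2) / q^2 + κ * (B * q - R^2) / q^2)
      = 2 * κ - κ * (y^2 * (P^2 + R^2)) / q^2 := barrier_alg κ q y A B P R hq0 hqid
  have hnn : 0 ≤ κ * (y^2 * (P^2 + R^2)) / q^2 := by positivity
  calc y^2 * (κ * (A * q - P^2) / q^2 + κ * (B * q - R^2) / q^2)
      = 2 * κ - κ * (y^2 * (P^2 + R^2)) / q^2 := key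
    _ ≤ 2 * κ := by linarith

/-- Omori–Yau-type maximum principle on the upper half-plane:
a bounded `C²` function `w` with `Δ_ℍ w ≥ c·w` and `c ≥ m > 0` is nonpositive. -/
theorem omori_yau_nonpositive
    (m : ℝ) (hm : 0 < m)
    (c : ℂ → ℝ) (hc_cont : ContinuousOn c UpperH)
    (hc_low : ∀ z ∈ UpperH, m ≤ c z)
    (w : ℂ → ℝ)
    (hw_smooth : ContDiffOn ℝ 2 w UpperH)
    (hw_bdd : ∃ M : ℝ, ∀ z ∈ UpperH, |w z| ≤ M)
    (hw_ineq : ∀ z ∈ UpperH, c z * w z ≤ hypLaplacian w z) :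
    ∀ z ∈ UpperH, w z ≤ 0 := by
  intro z₀ hz₀
  obtain ⟨M, hM⟩ := hw_bdd
  have hb : 0 < z₀.im := hz₀
  set a := z₀.re with had
  set b := z₀.im with hbd
  set κ := m/2 with hκd
  have hκ : 0 < κ := by positivity
  have hUopen : IsOpen UpperH := by
    have h : UpperH = Complex.im ⁻¹' Set.Ioi 0 := rfl
    rw [h]; exact isOpen_Ioi.preimage Complex.continuous_im
  have hwz₀ : w z₀ ≤ M := le_trans (le_abs_self _) (hM z₀ hz₀)
  have key : ∀ ε, 0 < ε → w z₀ ≤ 0 + ε := by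
    intro ε hε
    set G := barrierG a b κ with hGd
    set F := fun z => w z - ε * G z with hFd
    have hGz₀ : G z₀ = 1 := barrierG_self had.symm hbd.symm
    set B := (M - w z₀ + ε)/ε with hBd2
    have hB1 : 1 ≤ B := by rw [hBd2, le_div_iff₀ hε]; linarith
    set Q₀ := Real.exp ((B-1)/κ) with hQd
    have hQ1 : 1 ≤ Q₀ := by
      rw [hQd]; apply Real.one_le_exp; exact div_nonneg (by linarith) hκ.le
    have hQ0 : 0 < Q₀ := by linarith
    set K := {z : ℂ | b/(2*Q₀) ≤ z.im} ∩
      {z : ℂ | (z.re - a)^2 + (z.im - b)^2 - 2*b*z.im*(Q₀-1) ≤ 0} with hKd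
    have hQ2 : (0:ℝ) < 2*Q₀ := by linarith
    have hKsub : K ⊆ UpperH := by
      intro z hz
      have h1 : b/(2*Q₀) ≤ z.im := hz.1
      exact lt_of_lt_of_le (div_pos hb hQ2) h1
    have hQK : ∀ z ∈ UpperH, barrierQ a b z ≤ Q₀ → z ∈ K := by
      intro z hz hq
      have hzy : 0 < z.im := hz
      have h2by : 0 < 2*b*z.im := by positivity
      have hs : (z.re - a)^2 + (z.im - b)^2 ≤ 2*b*z.im*(Q₀-1) := by
        unfold barrierQ at hq
        rw [show (1:ℝ) + ((z.re - a)^2 + (z.im - b)^2)/(2*b*z.im) =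
          ((z.re - a)^2 + (z.im - b)^2)/(2*b*z.im) + 1 from by ring] at hq
        have := (div_le_iff₀ h2by).1 (by linarith : ((z.re - a)^2 + (z.im - b)^2)/(2*b*z.im) ≤ Q₀ - 1)
        linarith [this]
      constructor
      · show b/(2*Q₀) ≤ z.im
        rw [div_le_iff₀ hQ2]
        nlinarith [sq_nonneg (z.re - a), sq_nonneg z.im]
      · show (z.re - a)^2 + (z.im - b)^2 - 2*b*z.im*(Q₀-1) ≤ 0
        linarith
    have hKclosed : IsClosed K := by
      apply IsClosed.inter
      · exact isClosed_le continuous_const Complex.continuous_im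
      · exact isClosed_le (by fun_prop) continuous_const
    have hKbounded : Bornology.IsBounded K := by
      apply (Metric.isBounded_closedBall (x := z₀) (r := 3*b*Q₀)).subset
      intro z hz
      have hy1 : b/(2*Q₀) ≤ z.im := hz.1
      have hzy : 0 < z.im := lt_of_lt_of_le (div_pos hb hQ2) hy1
      have hs : (z.re - a)^2 + (z.im - b)^2 ≤ 2*b*z.im*(Q₀-1) := by
        have := hz.2; simp only [Set.mem_setOf_eq] at this; linarith
      have hyub : z.im ≤ 2*b*Q₀ := by nlinarith [sq_nonneg (z.re - a)]
      have hsb : (z.re - a)^2 + (z.im - b)^2 ≤ (3*b*Q₀)^2 := by nlinarith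
      simp only [Metric.mem_closedBall]
      rw [Complex.dist_eq_re_im, ← had, ← hbd]
      calc Real.sqrt ((z.re - a)^2 + (z.im - b)^2) ≤ Real.sqrt ((3*b*Q₀)^2) :=
            Real.sqrt_le_sqrt hsb
        _ = 3*b*Q₀ := Real.sqrt_sq (by positivity)
    have hKcompact := Metric.isCompact_of_isClosed_isBounded hKclosed hKbounded
    have hz₀K : z₀ ∈ K := by
      constructor
      · show b/(2*Q₀) ≤ z₀.im
        rw [← hbd, div_le_iff₀ hQ2]
        nlinarith
      · show (z₀.re - a)^2 + (z₀.im - b)^2 - 2*b*z₀.im*(Q₀-1) ≤ 0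
        rw [← had, ← hbd]
        simp only [sub_self]
        have h9 : 0 ≤ 2*b*b*(Q₀-1) :=
          mul_nonneg (mul_nonneg (by linarith) hb.le) (by linarith)
        nlinarith [h9]
    have hGcont : ContinuousOn G K := fun z hz =>
      (barrierG_continuousAt hb (hKsub hz)).continuousWithinAt
    have hFcont : ContinuousOn F K :=
      (hw_smooth.continuousOn.mono hKsub).sub (continuousOn_const.mul hGcont)
    obtain ⟨zs, hzsK, hzsmax⟩ := hKcompact.exists_isMaxOn ⟨z₀, hz₀K⟩ hFcont
    have hzsU : zs ∈ UpperH := hKsub hzsK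
    have hFz₀ : F z₀ = w z₀ - ε := by rw [hFd]; simp [hGz₀]
    have hglobal : ∀ z ∈ UpperH, F z ≤ F zs := by
      intro z hz
      by_cases hzK : z ∈ K
      · exact hzsmax hzK
      · have hq1z : 1 ≤ barrierQ a b z := barrierQ_ge_one hb hz
        have hq : Q₀ < barrierQ a b z := by
          by_contra hcon
          push_neg at hcon
          exact hzK (hQK z hz hcon)
        have hlog : (B-1)/κ < Real.log (barrierQ a b z) := by
          rw [Real.lt_log_iff_exp_lt (by linarith : 0 < barrierQ a b z)]
          rw [← hQd]; exact hq
        have hGB : B < G z := by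
          rw [hGd]
          unfold barrierG
          have h1 : κ * ((B-1)/κ) < κ * Real.log (barrierQ a b z) :=
            (mul_lt_mul_iff_right₀ hκ).2 hlog
          have h2 : κ * ((B-1)/κ) = B - 1 := by field_simp
          linarith
        have hwzM : w z ≤ M := le_trans (le_abs_self _) (hM z hz)
        have hεB : ε * B = M - w z₀ + ε := by
          rw [hBd2]; field_simp
        have hFlt : F z < F z₀ := by
          have hFz : F z = w z - ε * G z := rfl
          rw [hFz, hFz₀]
          have : ε * B < ε * G z := (mul_lt_mul_iff_right₀ hε).2 hGB
          linarith
        exact le_trans hFlt.le (hzsmax hz₀K)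
    -- derivative step at the maximum point zs
    have hy : 0 < zs.im := hzsU
    -- x-direction
    have hlinex : (fun t : ℝ => F (zs + (t:ℂ)))
        = fun t => (fun s : ℝ => w (zs + (s:ℂ))) t - ε * Gxline a b κ zs.re zs.im t := by
      funext t
      have h1 : F (zs + (t:ℂ)) = w (zs + (t:ℂ)) - ε * G (zs + (t:ℂ)) := rfl
      rw [h1, hGd, congrFun (line_eq_x a b κ zs) t]
    have hcontlx : Continuous (fun t : ℝ => zs + (t:ℂ)) :=
      continuous_const.add Complex.continuous_ofReal
    have hUxopen : IsOpen ((fun t : ℝ => zs + (t:ℂ)) ⁻¹' UpperH) := hUopen.preimage hcontlx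
    have h0Ux : (0:ℝ) ∈ (fun t : ℝ => zs + (t:ℂ)) ⁻¹' UpperH := by
      simp only [Set.mem_preimage, Complex.ofReal_zero, add_zero]
      exact hzsU
    have hwxC2 : ContDiffOn ℝ 2 (fun s : ℝ => w (zs + (s:ℂ)))
        ((fun t : ℝ => zs + (t:ℂ)) ⁻¹' UpperH) := by
      apply hw_smooth.comp
      · exact (contDiff_const.add Complex.ofRealCLM.contDiff).contDiffOn
      · exact fun t ht => ht
    have hfevx : ∀ᶠ t in 𝓝 (0:ℝ), DifferentiableAt ℝ (fun s : ℝ => w (zs + (s:ℂ))) t := by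
      filter_upwards [hUxopen.mem_nhds h0Ux] with t ht
      exact (hwxC2.differentiableOn (by norm_num)).differentiableAt (hUxopen.mem_nhds ht)
    have hdx1 : ContDiffOn ℝ 1 (deriv (fun s : ℝ => w (zs + (s:ℂ))))
        ((fun t : ℝ => zs + (t:ℂ)) ⁻¹' UpperH) :=
      hwxC2.deriv_of_isOpen hUxopen (by norm_num)
    have hfx2 : DifferentiableAt ℝ (deriv (fun s : ℝ => w (zs + (s:ℂ)))) 0 :=
      (hdx1.differentiableOn (by norm_num)).differentiableAt (hUxopen.mem_nhds h0Ux)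
    have hmaxx : IsLocalMax (fun t => (fun s : ℝ => w (zs + (s:ℂ))) t
        - ε * Gxline a b κ zs.re zs.im t) 0 := by
      rw [← hlinex]
      have h00 : F (zs + ((0:ℝ):ℂ)) = F zs := by norm_num
      have : ∀ᶠ t : ℝ in 𝓝 0, F (zs + (t:ℂ)) ≤ F (zs + ((0:ℝ):ℂ)) := by
        rw [h00]
        filter_upwards [hUxopen.mem_nhds h0Ux] with t ht
        exact hglobal _ ht
      exact this
    have combx := combined_secondDeriv_le hfevx hfx2
      (Eventually.of_forall (Gxline_hasDeriv hb hy))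
      (Gxline'_hasDeriv hb hy).differentiableAt hmaxx
    -- y-direction
    have hliney : (fun t : ℝ => F (zs + (t:ℂ) * Complex.I))
        = fun t => (fun s : ℝ => w (zs + (s:ℂ) * Complex.I)) t
            - ε * Gyline a b κ zs.re zs.im t := by
      funext t
      have h1 : F (zs + (t:ℂ) * Complex.I)
          = w (zs + (t:ℂ) * Complex.I) - ε * G (zs + (t:ℂ) * Complex.I) := rfl
      rw [h1, hGd, congrFun (line_eq_y a b κ zs) t]
    have hcontly : Continuous (fun t : ℝ => zs + (t:ℂ) * Complex.I) :=
      continuous_const.add (Complex.continuous_ofReal.mul continuous_const)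
    have hUyopen : IsOpen ((fun t : ℝ => zs + (t:ℂ) * Complex.I) ⁻¹' UpperH) :=
      hUopen.preimage hcontly
    have h0Uy : (0:ℝ) ∈ (fun t : ℝ => zs + (t:ℂ) * Complex.I) ⁻¹' UpperH := by
      simp only [Set.mem_preimage, Complex.ofReal_zero, zero_mul, add_zero]
      exact hzsU
    have hwyC2 : ContDiffOn ℝ 2 (fun s : ℝ => w (zs + (s:ℂ) * Complex.I))
        ((fun t : ℝ => zs + (t:ℂ) * Complex.I) ⁻¹' UpperH) := by
      apply hw_smooth.comp
      · exact (contDiff_const.add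
          (Complex.ofRealCLM.contDiff.mul contDiff_const)).contDiffOn
      · exact fun t ht => ht
    have hfevy : ∀ᶠ t in 𝓝 (0:ℝ),
        DifferentiableAt ℝ (fun s : ℝ => w (zs + (s:ℂ) * Complex.I)) t := by
      filter_upwards [hUyopen.mem_nhds h0Uy] with t ht
      exact (hwyC2.differentiableOn (by norm_num)).differentiableAt (hUyopen.mem_nhds ht)
    have hdy1 : ContDiffOn ℝ 1 (deriv (fun s : ℝ => w (zs + (s:ℂ) * Complex.I)))
        ((fun t : ℝ => zs + (t:ℂ) * Complex.I) ⁻¹' UpperH) :=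
      hwyC2.deriv_of_isOpen hUyopen (by norm_num)
    have hfy2 : DifferentiableAt ℝ (deriv (fun s : ℝ => w (zs + (s:ℂ) * Complex.I))) 0 :=
      (hdy1.differentiableOn (by norm_num)).differentiableAt (hUyopen.mem_nhds h0Uy)
    have hgyev : ∀ᶠ t in 𝓝 (0:ℝ),
        HasDerivAt (Gyline a b κ zs.re zs.im) (Gyline' a b κ zs.re zs.im t) t := by
      filter_upwards [Ioo_mem_nhds (by linarith : -zs.im < (0:ℝ)) hy] with t ht
      exact Gyline_hasDeriv hb (by linarith [ht.1])
    have hmaxy : IsLocalMax (fun t => (fun s : ℝ => w (zs + (s:ℂ) * Complex.I)) t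
        - ε * Gyline a b κ zs.re zs.im t) 0 := by
      rw [← hliney]
      have h00 : F (zs + ((0:ℝ):ℂ) * Complex.I) = F zs := by norm_num
      have : ∀ᶠ t : ℝ in 𝓝 0, F (zs + (t:ℂ) * Complex.I)
          ≤ F (zs + ((0:ℝ):ℂ) * Complex.I) := by
        rw [h00]
        filter_upwards [hUyopen.mem_nhds h0Uy] with t ht
        exact hglobal _ ht
      exact this
    have comby := combined_secondDeriv_le hfevy hfy2 hgyev
      (Gyline'_hasDeriv hb hy).differentiableAt hmaxy
    -- assemble the Laplacian inequality
    have hlapw : hypLaplacian w zs ≤ ε * hypLaplacian G zs := by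
      unfold hypLaplacian
      rw [hGd, line_eq_x, line_eq_y]
      have hint := mul_le_mul_of_nonneg_left (add_le_add combx comby) (sq_nonneg zs.im)
      nlinarith [hint]
    have hlapG : hypLaplacian G zs ≤ m := by
      rw [hGd]
      have := barrierG_hypLaplacian_le (a := a) hb hκ.le hy
      rw [hκd] at this
      linarith
    have hchain : c zs * w zs ≤ ε * m := by
      have h1 := hw_ineq zs hzsU
      have h2 : ε * hypLaplacian G zs ≤ ε * m := mul_le_mul_of_nonneg_left hlapG hε.le
      linarith
    have hwzs : w zs ≤ ε := by
      by_cases hsign : 0 ≤ w zs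
      · have h1 : m * w zs ≤ c zs * w zs :=
          mul_le_mul_of_nonneg_right (hc_low zs hzsU) hsign
        have h3 : m * w zs ≤ m * ε := by linarith
        exact (mul_le_mul_iff_right₀ hm).1 h3
      · linarith
    have hGzs : 1 ≤ G zs := barrierG_ge_one hκ.le hb hy
    have hFzs : F zs ≤ 0 := by
      rw [hFd]
      simp only []
      have h4 : ε * 1 ≤ ε * G zs := (mul_le_mul_iff_right₀ hε).2 hGzs
      linarith
    have h5 := hglobal z₀ hz₀
    rw [hFz₀] at h5
    linarith
  exact le_of_forall_pos_le_add key
end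

section
/- Let f : ℍ → ℝ be continuous with f ≥ 0. Then every bounded C² function u : ℍ → ℝ satisfying Δ_ℍ u = 2e^{2u} − 1 + e^{−4u} f on ℍ satisfies u(z) ≤ −ln(2)/2 for all z ∈ ℍ. -/
lemma iteratedDeriv_two (g : ℝ → ℝ) : iteratedDeriv 2 g = deriv (deriv g) := by
  rw [show (2:ℕ) = 1 + 1 from rfl, iteratedDeriv_succ, iteratedDeriv_one]

/-- Second derivative test: at a C² local max, the second derivative is ≤ 0. -/
lemma secondDeriv_nonpos_of_isLocalMax {g : ℝ → ℝ} (hg : ContDiffAt ℝ 2 g 0)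
    (hmax : IsLocalMax g 0) : deriv (deriv g) 0 ≤ 0 := by
  by_contra hpos
  push_neg at hpos
  obtain ⟨s, hs_mem, hs⟩ := hg.contDiffOn (le_refl 2) (by simp)
  obtain ⟨t, hts, ht_open, ht0⟩ := mem_nhds_iff.1 hs_mem
  have hst : ContDiffOn ℝ 2 g t := hs.mono hts
  have hderiv : ContDiffOn ℝ 1 (deriv g) t :=
    hst.deriv_of_isOpen ht_open (by norm_num)
  have hdiff : ∀ x ∈ t, DifferentiableAt ℝ g x := fun x hx =>
    (hst.differentiableOn (by norm_num)).differentiableAt (ht_open.mem_nhds hx)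
  have h0 : deriv g 0 = 0 := hmax.deriv_eq_zero
  have hD : HasDerivAt (deriv g) (deriv (deriv g) 0) 0 := by
    have : DifferentiableAt ℝ (deriv g) 0 :=
      (hderiv.differentiableOn (by norm_num)).differentiableAt (ht_open.mem_nhds ht0)
    exact this.hasDerivAt
  have hslope : ∀ᶠ x in nhdsWithin 0 (Set.Ioi 0), 0 < deriv g x := by
    have h1 := hD.hasDerivWithinAt (s := Set.Ioi (0:ℝ))
    have h2 : Filter.Tendsto (slope (deriv g) 0) (nhdsWithin 0 (Set.Ioi 0))
        (nhds (deriv (deriv g) 0)) := by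
      have := hasDerivWithinAt_iff_tendsto_slope.1 h1
      rwa [Set.diff_singleton_eq_self (by simp)] at this
    have h3 := h2.eventually (eventually_gt_nhds hpos)
    filter_upwards [h3, self_mem_nhdsWithin] with x hx hx'
    have hxpos : (0:ℝ) < x := hx'
    rw [slope_def_field, h0, sub_zero, sub_zero] at hx
    by_contra hc
    push_neg at hc
    exact absurd hx (not_lt.2 (div_nonpos_of_nonpos_of_nonneg hc hxpos.le))
  obtain ⟨δ1, hδ1, hball⟩ := Metric.mem_nhds_iff.1 (ht_open.mem_nhds ht0)
  obtain ⟨δ2, hδ2, hio⟩ := (Metric.mem_nhdsWithin_iff).1 hslope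
  obtain ⟨δ3, hδ3, hloc⟩ := Metric.mem_nhds_iff.1 hmax
  set δ : ℝ := min δ1 (min δ2 δ3) / 2 with hδdef
  have hδpos : 0 < δ := by positivity
  have hIcc : Set.Icc (0:ℝ) δ ⊆ t := by
    intro x hx
    apply hball
    simp only [Metric.mem_ball, Real.dist_eq, abs_lt]
    constructor <;> [linarith [hx.1]; skip]
    have : δ < δ1 := by
      simp only [hδdef]
      have : min δ1 (min δ2 δ3) ≤ δ1 := min_le_left _ _
      linarith
    linarith [hx.2]
  have hmono : StrictMonoOn g (Set.Icc 0 δ) := by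
    apply strictMonoOn_of_deriv_pos (convex_Icc 0 δ)
    · exact (hst.continuousOn).mono hIcc
    · intro x hx
      rw [interior_Icc] at hx
      apply hio
      constructor
      · simp only [Metric.mem_ball, Real.dist_eq, sub_zero]
        rw [abs_of_pos hx.1]
        have : δ < δ2 := by
          have h1 : min δ1 (min δ2 δ3) ≤ δ2 := (min_le_right _ _).trans (min_le_left _ _)
          simp only [hδdef]; linarith
        linarith [hx.2]
      · exact hx.1
  have hcontra : g 0 < g δ := hmono ⟨le_refl 0, hδpos.le⟩ ⟨hδpos.le, le_refl δ⟩ hδpos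
  have : g δ ≤ g 0 := by
    apply hloc
    simp only [Metric.mem_ball, Real.dist_eq, sub_zero]
    rw [abs_of_pos hδpos]
    have h1 : min δ1 (min δ2 δ3) ≤ δ3 := (min_le_right _ _).trans (min_le_right _ _)
    simp only [hδdef]; linarith
  linarith

noncomputable def phiB (z : ℂ) : ℝ := Real.log ((z.re^2 + z.im^2 + 1)/(2*z.im))

lemma phiB_nonneg {z : ℂ} (hz : 0 < z.im) : 0 ≤ phiB z := by
  unfold phiB
  apply Real.log_nonneg
  rw [le_div_iff₀ (by positivity)]
  nlinarith [sq_nonneg (z.im - 1), sq_nonneg z.re]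

lemma phiB_I : phiB Complex.I = 0 := by
  simp [phiB]

lemma phiB_horiz {z : ℂ} (hz : 0 < z.im) :
    (fun t : ℝ => phiB (z + (t:ℂ))) =
      fun t => Real.log ((z.re + t)^2 + z.im^2 + 1) - Real.log (2*z.im) := by
  funext t
  have h1 : (z + (t:ℂ)).re = z.re + t := by simp
  have h2 : (z + (t:ℂ)).im = z.im := by simp
  rw [phiB, h1, h2, Real.log_div (by positivity) (by positivity)]

lemma phiB_horiz_deriv2 {z : ℂ} (hz : 0 < z.im) :
    deriv (deriv (fun t : ℝ => phiB (z + (t:ℂ)))) 0 =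
      (2*(z.re^2 + z.im^2 + 1) - 4*z.re^2) / (z.re^2 + z.im^2 + 1)^2 := by
  set x := z.re; set y := z.im
  have hq : ∀ s : ℝ, HasDerivAt (fun t : ℝ => (x + t)^2 + y^2 + 1) (2*(x+s)) s := by
    intro s
    have h : HasDerivAt (fun t : ℝ => (x+t)^2 + (y^2+1)) (2*(x+s)) s := by
      simpa using (((hasDerivAt_id s).const_add x).pow 2).add_const (y^2+1)
    simpa [add_assoc] using h
  have hqpos : ∀ s : ℝ, 0 < (x + s)^2 + y^2 + 1 := fun s => by positivity
  have hd : deriv (fun t : ℝ => phiB (z + (t:ℂ))) =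
      fun s => 2*(x+s) / ((x+s)^2 + y^2 + 1) := by
    funext s
    rw [phiB_horiz hz]
    exact (((hq s).log (hqpos s).ne').sub_const _).deriv
  rw [hd]
  have h := (((hasDerivAt_id (0:ℝ)).const_add x).const_mul 2).div (hq 0) (hqpos 0).ne'
  simp only [id_eq, Pi.div_def] at h
  rw [h.deriv]
  have hD := (hqpos 0).ne'
  field_simp
  ring

lemma phiB_vert_deriv2 {z : ℂ} (hz : 0 < z.im) :
    deriv (deriv (fun t : ℝ => phiB (z + (t:ℂ)*Complex.I))) 0 =
      (2*(z.re^2 + z.im^2 + 1) - 4*z.im^2) / (z.re^2 + z.im^2 + 1)^2 + 1/z.im^2 := by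
  set x := z.re; set y := z.im
  set V : ℝ → ℝ := fun t => Real.log (x^2 + (y + t)^2 + 1) - Real.log (2*(y+t)) with hV
  have hIoi : Set.Ioi (-y) ∈ nhds (0:ℝ) := Ioi_mem_nhds (by linarith)
  have hEE : (fun t : ℝ => phiB (z + (t:ℂ)*Complex.I)) =ᶠ[nhds 0] V := by
    filter_upwards [hIoi] with t ht
    have hyt : 0 < y + t := by linarith [Set.mem_Ioi.mp ht]
    have h1 : (z + (t:ℂ)*Complex.I).re = x := by simp; rfl
    have h2 : (z + (t:ℂ)*Complex.I).im = y + t := by simp; rfl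
    rw [phiB, h1, h2, Real.log_div (by positivity) (by positivity)]
  rw [(hEE.deriv).deriv_eq]
  have hq : ∀ s : ℝ, HasDerivAt (fun t : ℝ => x^2 + (y+t)^2 + 1) (2*(y+s)) s := by
    intro s
    have h : HasDerivAt (fun t : ℝ => (y+t)^2 + (x^2+1)) (2*(y+s)) s := by
      simpa using (((hasDerivAt_id s).const_add y).pow 2).add_const (x^2+1)
    have he : (fun t : ℝ => x^2 + (y+t)^2 + 1) = (fun t : ℝ => (y+t)^2 + (x^2+1)) := by
      funext t; ring
    rw [he]; exact h
  have hqpos : ∀ s : ℝ, 0 < x^2 + (y+s)^2 + 1 := fun s => by positivity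
  have hden : ∀ s : ℝ, HasDerivAt (fun t : ℝ => 2*(y+t)) 2 s := by
    intro s
    simpa using ((hasDerivAt_id s).const_add y).const_mul 2
  have hdV : deriv V =ᶠ[nhds 0]
      fun s => 2*(y+s) / (x^2+(y+s)^2+1) - 2/(2*(y+s)) := by
    filter_upwards [hIoi] with s hs
    have hys : 0 < y + s := by linarith [Set.mem_Ioi.mp hs]
    exact (((hq s).log (hqpos s).ne').sub (((hden s).log (by positivity)))).deriv
  rw [hdV.deriv_eq]
  have h1 := (((hasDerivAt_id (0:ℝ)).const_add y).const_mul 2).div (hq 0) (hqpos 0).ne'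
  have h2 := (hasDerivAt_const (0:ℝ) (2:ℝ)).div (hden 0) (by positivity : (0:ℝ) < 2*(y+0)).ne'
  have h := h1.sub h2
  simp only [id_eq, Pi.div_def, Pi.sub_def] at h
  rw [h.deriv]
  have hD := (hqpos 0).ne'
  have hy := hz.ne'
  field_simp
  ring

lemma phiB_horiz_contDiffAt {z : ℂ} (hz : 0 < z.im) :
    ContDiffAt ℝ 2 (fun t : ℝ => phiB (z + (t:ℂ))) 0 := by
  rw [phiB_horiz hz]
  have hq : ContDiffAt ℝ 2 (fun t : ℝ => (z.re + t)^2 + z.im^2 + 1) 0 := by fun_prop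
  exact (hq.log (by positivity)).sub contDiffAt_const

lemma phiB_vert_contDiffAt {z : ℂ} (hz : 0 < z.im) :
    ContDiffAt ℝ 2 (fun t : ℝ => phiB (z + (t:ℂ)*Complex.I)) 0 := by
  have hIoi : Set.Ioi (-z.im) ∈ nhds (0:ℝ) := Ioi_mem_nhds (by linarith)
  have hEE : (fun t : ℝ => Real.log ((z.re)^2 + (z.im + t)^2 + 1) - Real.log (2*(z.im+t)))
      =ᶠ[nhds 0] (fun t : ℝ => phiB (z + (t:ℂ)*Complex.I)) := by
    filter_upwards [hIoi] with t ht
    have hyt : 0 < z.im + t := by linarith [Set.mem_Ioi.mp ht]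
    have h1 : (z + (t:ℂ)*Complex.I).re = z.re := by simp
    have h2 : (z + (t:ℂ)*Complex.I).im = z.im + t := by simp
    rw [phiB, h1, h2, Real.log_div (by positivity) (by positivity)]
  apply ContDiffAt.congr_of_eventuallyEq _ hEE.symm
  have hq : ContDiffAt ℝ 2 (fun t : ℝ => (z.re)^2 + (z.im + t)^2 + 1) 0 := by fun_prop
  have hq2 : ContDiffAt ℝ 2 (fun t : ℝ => 2*(z.im + t)) 0 := by fun_prop
  exact (hq.log (by positivity)).sub (hq2.log (by positivity))

lemma deriv2_sub_const_mul {f g : ℝ → ℝ} (hf : ContDiffAt ℝ 2 f 0) (hg : ContDiffAt ℝ 2 g 0)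
    (c : ℝ) :
    deriv (deriv (fun t => f t - c * g t)) 0 =
      deriv (deriv f) 0 - c * deriv (deriv g) 0 := by
  obtain ⟨s1, hs1_mem, hs1⟩ := hf.contDiffOn (le_refl 2) (by simp)
  obtain ⟨t1, ht1s, ht1_open, ht10⟩ := mem_nhds_iff.1 hs1_mem
  obtain ⟨s2, hs2_mem, hs2⟩ := hg.contDiffOn (le_refl 2) (by simp)
  obtain ⟨t2, ht2s, ht2_open, ht20⟩ := mem_nhds_iff.1 hs2_mem
  set T := t1 ∩ t2 with hT
  have hT_open : IsOpen T := ht1_open.inter ht2_open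
  have hT0 : (0:ℝ) ∈ T := ⟨ht10, ht20⟩
  have hfT : ContDiffOn ℝ 2 f T := (hs1.mono ht1s).mono Set.inter_subset_left
  have hgT : ContDiffOn ℝ 2 g T := (hs2.mono ht2s).mono Set.inter_subset_right
  have hfd : ∀ x ∈ T, DifferentiableAt ℝ f x := fun x hx =>
    (hfT.differentiableOn (by norm_num)).differentiableAt (hT_open.mem_nhds hx)
  have hgd : ∀ x ∈ T, DifferentiableAt ℝ g x := fun x hx =>
    (hgT.differentiableOn (by norm_num)).differentiableAt (hT_open.mem_nhds hx)
  have hEE : deriv (fun t => f t - c * g t) =ᶠ[nhds 0]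
      fun x => deriv f x - c * deriv g x := by
    filter_upwards [hT_open.mem_nhds hT0] with x hx
    rw [deriv_fun_sub (hfd x hx) ((hgd x hx).const_mul c), deriv_const_mul c (hgd x hx)]
  rw [hEE.deriv_eq]
  have hfd1 : DifferentiableAt ℝ (deriv f) 0 :=
    (((hfT.deriv_of_isOpen (m := 1) hT_open (by norm_num)).differentiableOn
      (by norm_num)).differentiableAt (hT_open.mem_nhds hT0))
  have hgd1 : DifferentiableAt ℝ (deriv g) 0 :=
    (((hgT.deriv_of_isOpen (m := 1) hT_open (by norm_num)).differentiableOn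
      (by norm_num)).differentiableAt (hT_open.mem_nhds hT0))
  rw [deriv_fun_sub hfd1 (hgd1.const_mul c), deriv_const_mul c hgd1]

lemma phiB_continuousAt {z : ℂ} (hz : 0 < z.im) : ContinuousAt phiB z := by
  have h1 : ContinuousAt (fun w : ℂ => (w.re^2 + w.im^2 + 1)/(2*w.im)) z := by
    apply ContinuousAt.div (by fun_prop) (by fun_prop)
    positivity
  exact (Real.continuousAt_log (by positivity)).comp h1

set_option maxHeartbeats 1000000 in
/-- A priori upper bound: any bounded `C²` solution of the Gauss equation
with `f ≥ 0` satisfies `u ≤ −ln(2)/2`. -/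
theorem gauss_equation_upper_bound
    (f : ℂ → ℝ) (hf_cont : ContinuousOn f UpperH)
    (hf_nonneg : ∀ z ∈ UpperH, 0 ≤ f z)
    (u : ℂ → ℝ)
    (hu_smooth : ContDiffOn ℝ 2 u UpperH)
    (hu_bdd : ∃ M : ℝ, ∀ z ∈ UpperH, |u z| ≤ M)
    (hu_eq : ∀ z ∈ UpperH,
      hypLaplacian u z = 2 * Real.exp (2 * u z) - 1 + Real.exp (-4 * u z) * f z) :
    ∀ z ∈ UpperH, u z ≤ -Real.log 2 / 2 := by
  obtain ⟨M0, hM0⟩ := hu_bdd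
  set M : ℝ := max M0 0 with hMdef
  have hM : ∀ z ∈ UpperH, |u z| ≤ M := fun z hz => (hM0 z hz).trans (le_max_left _ _)
  have hMpos : 0 ≤ M := le_max_right _ _
  have hUopen : IsOpen UpperH := isOpen_lt continuous_const Complex.continuous_im
  have hIU : Complex.I ∈ UpperH := by simp [UpperH]
  intro z hz
  have hzim : 0 < z.im := hz
  -- Key estimate for each ε > 0
  have key : ∀ ε : ℝ, 0 < ε →
      2 * Real.exp (2 * u z) ≤ (1 + 2*ε) * Real.exp (2*(ε * phiB z)) := by
    intro ε hε
    set C : ℝ := (3*M + 1)/ε with hCdef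
    have hC : 0 < C := by positivity
    set R : ℝ := Real.exp C with hRdef
    have hR1 : 1 < R := Real.one_lt_exp_iff.2 hC
    have hR0 : 0 < R := by linarith
    set K : Set ℂ := Metric.closedBall ((R:ℂ)*Complex.I) (Real.sqrt (R^2 - 1)) with hKdef
    have hdist2 : ∀ w : ℂ, dist w ((R:ℂ)*Complex.I) ^ 2 = w.re^2 + (w.im - R)^2 := by
      intro w
      rw [Complex.dist_eq, Complex.sq_norm, Complex.normSq_apply]
      simp
      ring
    have hmemK : ∀ w : ℂ, w ∈ K ↔ w.re^2 + (w.im - R)^2 ≤ R^2 - 1 := by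
      intro w
      rw [hKdef, Metric.mem_closedBall, ← hdist2 w]
      rw [show dist w ((R:ℂ)*Complex.I) ≤ Real.sqrt (R^2-1) ↔
        dist w ((R:ℂ)*Complex.I) ^2 ≤ R^2 - 1 from
          Real.le_sqrt dist_nonneg (by nlinarith)]
    have hsub : K ⊆ UpperH := by
      intro w hw
      rw [hmemK] at hw
      have : 0 < w.im := by nlinarith [sq_nonneg w.re, sq_nonneg w.im]
      exact this
    have hiff : ∀ w ∈ UpperH, (phiB w ≤ C ↔ w ∈ K) := by
      intro w hw
      have hwim : 0 < w.im := hw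
      rw [hmemK]
      unfold phiB
      rw [Real.log_le_iff_le_exp (by positivity), ← hRdef, div_le_iff₀ (by positivity)]
      constructor <;> intro h <;> nlinarith
    set v : ℂ → ℝ := fun w => u w - ε * phiB w with hvdef
    have hvcont : ContinuousOn v K := by
      apply ContinuousOn.sub
      · exact (hu_smooth.continuousOn).mono hsub
      · apply ContinuousOn.mul continuousOn_const
        intro w hw
        exact (phiB_continuousAt (hsub hw)).continuousWithinAt
    have hIK : Complex.I ∈ K := by
      rw [← hiff Complex.I hIU, phiB_I]
      exact hC.le
    obtain ⟨p, hpK, hpmax⟩ :=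
      (isCompact_closedBall _ _).exists_isMaxOn ⟨Complex.I, hIK⟩ hvcont
    have hpU : p ∈ UpperH := hsub hpK
    have hpim : 0 < p.im := hpU
    have hglobal : ∀ w ∈ UpperH, v w ≤ v p := by
      intro w hw
      by_cases hwK : w ∈ K
      · exact hpmax hwK
      · have hphi : C < phiB w := lt_of_not_ge (fun h => hwK ((hiff w hw).1 h))
        have hεC : ε * C = 3*M + 1 := by
          rw [hCdef]; field_simp
        have h1 : v w ≤ M - (3*M+1) := by
          have := (abs_le.1 (hM w hw)).2
          have h2 : ε * C ≤ ε * phiB w := by nlinarith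
          simp only [hvdef]
          nlinarith
        have h2 : v Complex.I ≤ v p := hpmax hIK
        have h3 : -M ≤ v Complex.I := by
          simp only [hvdef, phiB_I]
          have := (abs_le.1 (hM Complex.I hIU)).1
          linarith
        linarith
    have hlmax : IsLocalMax v p := by
      filter_upwards [hUopen.mem_nhds hpU] with w hw using hglobal w hw
    -- C² of line restrictions of u
    have hup : ContDiffAt ℝ 2 u p := hu_smooth.contDiffAt (hUopen.mem_nhds hpU)
    have hcd1 : ContDiff ℝ 2 (fun t : ℝ => p + (t:ℂ)) :=
      contDiff_const.add Complex.ofRealCLM.contDiff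
    have hcd2 : ContDiff ℝ 2 (fun t : ℝ => p + (t:ℂ)*Complex.I) :=
      contDiff_const.add (Complex.ofRealCLM.contDiff.mul contDiff_const)
    have hline1 : ContDiffAt ℝ 2 (fun t : ℝ => u (p + (t:ℂ))) 0 := by
      have hup' : ContDiffAt ℝ 2 u (p + ((0:ℝ):ℂ)) := by simpa using hup
      exact ContDiffAt.comp (g := u) (f := fun t : ℝ => p + (t:ℂ)) 0 hup' hcd1.contDiffAt
    have hline2 : ContDiffAt ℝ 2 (fun t : ℝ => u (p + (t:ℂ)*Complex.I)) 0 := by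
      have hup' : ContDiffAt ℝ 2 u (p + ((0:ℝ):ℂ)*Complex.I) := by simpa using hup
      exact ContDiffAt.comp (g := u) (f := fun t : ℝ => p + (t:ℂ)*Complex.I) 0 hup' hcd2.contDiffAt
    -- local max along lines
    have hlm1 : IsLocalMax (fun t : ℝ => v (p + (t:ℂ))) 0 := by
      have hc : Filter.Tendsto (fun t : ℝ => p + (t:ℂ)) (nhds 0) (nhds p) := by
        have := (hcd1.continuous).tendsto 0
        simpa using this
      have := hc.eventually hlmax
      simpa [IsLocalMax, IsMaxFilter] using this
    have hlm2 : IsLocalMax (fun t : ℝ => v (p + (t:ℂ)*Complex.I)) 0 := by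
      have hc : Filter.Tendsto (fun t : ℝ => p + (t:ℂ)*Complex.I) (nhds 0) (nhds p) := by
        have := (hcd2.continuous).tendsto 0
        simpa using this
      have := hc.eventually hlmax
      simpa [IsLocalMax, IsMaxFilter] using this
    -- second derivative tests
    have ht1 : deriv (deriv (fun t : ℝ => v (p + (t:ℂ)))) 0 ≤ 0 :=
      secondDeriv_nonpos_of_isLocalMax
        (hline1.sub ((phiB_horiz_contDiffAt hpim).const_smul ε)) hlm1
    have ht2 : deriv (deriv (fun t : ℝ => v (p + (t:ℂ)*Complex.I))) 0 ≤ 0 :=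
      secondDeriv_nonpos_of_isLocalMax
        (hline2.sub ((phiB_vert_contDiffAt hpim).const_smul ε)) hlm2
    -- decompose
    have hdec1 : deriv (deriv (fun t : ℝ => v (p + (t:ℂ)))) 0 =
        deriv (deriv (fun t : ℝ => u (p + (t:ℂ)))) 0 -
          ε * deriv (deriv (fun t : ℝ => phiB (p + (t:ℂ)))) 0 :=
      deriv2_sub_const_mul hline1 (phiB_horiz_contDiffAt hpim) ε
    have hdec2 : deriv (deriv (fun t : ℝ => v (p + (t:ℂ)*Complex.I))) 0 =
        deriv (deriv (fun t : ℝ => u (p + (t:ℂ)*Complex.I))) 0 -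
          ε * deriv (deriv (fun t : ℝ => phiB (p + (t:ℂ)*Complex.I))) 0 :=
      deriv2_sub_const_mul hline2 (phiB_vert_contDiffAt hpim) ε
    -- Laplacian bound at p
    set D : ℝ := p.re^2 + p.im^2 + 1 with hDdef
    have hDpos : 0 < D := by positivity
    have hD2y : 2 * p.im ≤ D := by nlinarith [sq_nonneg (p.im - 1), sq_nonneg p.re]
    have hlapphi : p.im^2 * (deriv (deriv (fun t : ℝ => phiB (p + (t:ℂ)))) 0 +
        deriv (deriv (fun t : ℝ => phiB (p + (t:ℂ)*Complex.I))) 0) ≤ 2 := by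
      rw [phiB_horiz_deriv2 hpim, phiB_vert_deriv2 hpim, ← hDdef]
      have heq : p.im^2 * ((2*D - 4*p.re^2)/D^2 + ((2*D - 4*p.im^2)/D^2 + 1/p.im^2)) =
          4*p.im^2/D^2 + 1 := by
        field_simp
        ring
      rw [heq]
      have : 4*p.im^2 ≤ D^2 := by nlinarith
      have h2 : 4*p.im^2/D^2 ≤ 1 := by
        rw [div_le_one (by positivity)]
        exact this
      linarith
    have hlapu : hypLaplacian u p ≤ 2*ε := by
      unfold hypLaplacian
      rw [iteratedDeriv_two, iteratedDeriv_two]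
      have e1 : deriv (deriv (fun t : ℝ => u (p + (t:ℂ)))) 0 ≤
          ε * deriv (deriv (fun t : ℝ => phiB (p + (t:ℂ)))) 0 := by
        rw [hdec1] at ht1; linarith
      have e2 : deriv (deriv (fun t : ℝ => u (p + (t:ℂ)*Complex.I))) 0 ≤
          ε * deriv (deriv (fun t : ℝ => phiB (p + (t:ℂ)*Complex.I))) 0 := by
        rw [hdec2] at ht2; linarith
      have hsq : (0:ℝ) ≤ p.im^2 := sq_nonneg _
      calc p.im^2 * (deriv (deriv (fun t : ℝ => u (p + (t:ℂ)))) 0 +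
            deriv (deriv (fun t : ℝ => u (p + (t:ℂ)*Complex.I))) 0)
          ≤ p.im^2 * (ε * deriv (deriv (fun t : ℝ => phiB (p + (t:ℂ)))) 0 +
            ε * deriv (deriv (fun t : ℝ => phiB (p + (t:ℂ)*Complex.I))) 0) := by
            apply mul_le_mul_of_nonneg_left (by linarith) hsq
        _ = ε * (p.im^2 * (deriv (deriv (fun t : ℝ => phiB (p + (t:ℂ)))) 0 +
            deriv (deriv (fun t : ℝ => phiB (p + (t:ℂ)*Complex.I))) 0)) := by ring
        _ ≤ ε * 2 := by
            apply mul_le_mul_of_nonneg_left hlapphi hε.le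
        _ = 2*ε := by ring
    -- use the equation
    have hexp : 2 * Real.exp (2 * u p) ≤ 1 + 2*ε := by
      have heq := hu_eq p hpU
      have hf0 : 0 ≤ Real.exp (-4 * u p) * f p :=
        mul_nonneg (Real.exp_pos _).le (hf_nonneg p hpU)
      rw [heq] at hlapu
      linarith
    -- compare u z with u p
    have huz : u z ≤ u p + ε * phiB z := by
      have h1 := hglobal z hz
      have h2 : 0 ≤ phiB p := phiB_nonneg hpim
      simp only [hvdef] at h1
      nlinarith
    have hmono := Real.exp_le_exp.2 (by linarith : 2 * u z ≤ 2 * u p + 2*(ε * phiB z))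
    rw [Real.exp_add] at hmono
    have hp1 : (0:ℝ) < Real.exp (2*(ε * phiB z)) := Real.exp_pos _
    calc 2 * Real.exp (2 * u z) ≤ 2 * (Real.exp (2*u p) * Real.exp (2*(ε * phiB z))) := by
          linarith
      _ = (2 * Real.exp (2*u p)) * Real.exp (2*(ε * phiB z)) := by ring
      _ ≤ (1 + 2*ε) * Real.exp (2*(ε * phiB z)) := by
          apply mul_le_mul_of_nonneg_right hexp hp1.le
  -- pass to the limit ε → 0⁺
  have hlim : Filter.Tendsto (fun ε : ℝ => (1 + 2*ε) * Real.exp (2*(ε * phiB z)))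
      (nhdsWithin 0 (Set.Ioi 0)) (nhds 1) := by
    have hcont : Continuous (fun ε : ℝ => (1 + 2*ε) * Real.exp (2*(ε * phiB z))) := by
      fun_prop
    have h0 := hcont.tendsto 0
    simp only [mul_zero, zero_mul, Real.exp_zero, mul_one, add_zero] at h0
    exact h0.mono_left nhdsWithin_le_nhds
  have hfin : 2 * Real.exp (2 * u z) ≤ 1 := by
    apply ge_of_tendsto hlim
    filter_upwards [self_mem_nhdsWithin] with ε hε
    exact key ε hε
  have h2 : Real.exp (2 * u z) ≤ 1/2 := by linarith
  have h3 : 2 * u z ≤ Real.log (1/2) := (Real.le_log_iff_exp_le (by norm_num)).2 h2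
  rw [Real.log_div one_ne_zero two_ne_zero, Real.log_one] at h3
  linarith
end
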